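/- arXiv:0809.0744 — 5 statements merged into one kernel-verified Lean document; each statement's English description precedes it below -/
import Mathlib

section
/- If (X, d) is a compact metric space and μ is a signed Borel measure of total mass 1 on X such that I(μ) = M(X) < ∞ (i.e., μ is maximal), then the function d_μ(x) = ∫ d(x,y) dμ(y) is constant on X with value M(X). -/
open MeasureTheory
open scoped NNReal ENNReal

/-- Integral of a function against a finite signed Borel measure, via Jordan decomposition. -/
noncomputable def sInt {X : Type*} [MeasurableSpace X] (μ : SignedMeasure X) (f : X → ℝ) : ℝ :=
  (∫ x, f x ∂μ.toJordanDecomposition.posPart) - ∫ x, f x ∂μ.toJordanDecomposition.negPart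

/-- Energy `I(μ, ν) = ∫∫ d(x,y) dμ(x) dν(y)` with respect to a kernel `d`. -/
noncomputable def en {X : Type*} [MeasurableSpace X] (d : X → X → ℝ)
    (μ ν : SignedMeasure X) : ℝ :=
  sInt μ (fun x => sInt ν (fun y => d x y))

/-- The potential `d_μ(x) = ∫ d(x,y) dμ(y)`. -/
noncomputable def dPot {X : Type*} [MeasurableSpace X] (d : X → X → ℝ)
    (μ : SignedMeasure X) (x : X) : ℝ :=
  sInt μ (fun y => d x y)

/-- The set of energies `I(μ)` of signed Borel measures of total mass one. -/
noncomputable def MSet (X : Type*) [MetricSpace X] [MeasurableSpace X] : Set ℝ :=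
  {r | ∃ μ : SignedMeasure X, μ Set.univ = (1 : ℝ) ∧ en (fun x y => dist x y) μ μ = r}

set_option linter.unusedSectionVars false

section Aux

variable {X : Type*} [MetricSpace X] [CompactSpace X] [MeasurableSpace X] [BorelSpace X]

lemma cInt {f : X → ℝ} (hf : Continuous f) (m : Measure X) [IsFiniteMeasure m] :
    Integrable f m :=
  hf.integrable_of_hasCompactSupport (HasCompactSupport.of_compactSpace f)

lemma sm_apply (τ : SignedMeasure X) {s : Set X} (hs : MeasurableSet s) :
    τ s = (τ.toJordanDecomposition.posPart s).toReal
      - (τ.toJordanDecomposition.negPart s).toReal := by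
  conv_lhs => rw [← τ.toSignedMeasure_toJordanDecomposition]
  rw [JordanDecomposition.toSignedMeasure, VectorMeasure.sub_apply,
    Measure.toSignedMeasure_apply_measurable hs, Measure.toSignedMeasure_apply_measurable hs]
  rfl

lemma jordan_add (μ ν : SignedMeasure X) :
    (μ + ν).toJordanDecomposition.posPart
      + (μ.toJordanDecomposition.negPart + ν.toJordanDecomposition.negPart)
    = (μ + ν).toJordanDecomposition.negPart
      + (μ.toJordanDecomposition.posPart + ν.toJordanDecomposition.posPart) := by
  ext s hs
  have h1 := sm_apply (μ + ν) hs
  have h2 := sm_apply μ hs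
  have h3 := sm_apply ν hs
  have h4 : (μ + ν) s = μ s + ν s := VectorMeasure.add_apply _ _ _
  simp only [Measure.add_apply]
  refine (ENNReal.toReal_eq_toReal_iff' ?_ ?_).mp ?_
  · exact ENNReal.add_ne_top.mpr ⟨measure_ne_top _ _,
      ENNReal.add_ne_top.mpr ⟨measure_ne_top _ _, measure_ne_top _ _⟩⟩
  · exact ENNReal.add_ne_top.mpr ⟨measure_ne_top _ _,
      ENNReal.add_ne_top.mpr ⟨measure_ne_top _ _, measure_ne_top _ _⟩⟩
  · rw [ENNReal.toReal_add (measure_ne_top _ _)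
        (ENNReal.add_ne_top.mpr ⟨measure_ne_top _ _, measure_ne_top _ _⟩),
      ENNReal.toReal_add (measure_ne_top _ _)
        (ENNReal.add_ne_top.mpr ⟨measure_ne_top _ _, measure_ne_top _ _⟩),
      ENNReal.toReal_add (measure_ne_top _ _) (measure_ne_top _ _),
      ENNReal.toReal_add (measure_ne_top _ _) (measure_ne_top _ _)]
    linarith

lemma sInt_add (μ ν : SignedMeasure X) {f : X → ℝ} (hf : Continuous f) :
    sInt (μ + ν) f = sInt μ f + sInt ν f := by
  have key := congrArg (fun m : Measure X => ∫ x, f x ∂m) (jordan_add μ ν)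
  try simp only at key
  rw [integral_add_measure (cInt hf _) (cInt hf _), integral_add_measure (cInt hf _) (cInt hf _),
    integral_add_measure (cInt hf _) (cInt hf _), integral_add_measure (cInt hf _) (cInt hf _)]
    at key
  simp only [sInt]
  linarith

lemma smul_nn_measure (r : ℝ≥0) (m : Measure X) : (r • m) = ((r : ℝ≥0∞) • m) := rfl

lemma sInt_smul (r : ℝ) (μ : SignedMeasure X) (f : X → ℝ) :
    sInt (r • μ) f = r * sInt μ f := by
  rcases le_or_gt 0 r with hr | hr
  · simp only [sInt, SignedMeasure.toJordanDecomposition_smul_real,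
      JordanDecomposition.real_smul_posPart_nonneg _ _ hr,
      JordanDecomposition.real_smul_negPart_nonneg _ _ hr,
      smul_nn_measure, integral_smul_measure]
    simp only [ENNReal.coe_toReal, Real.coe_toNNReal _ hr, smul_eq_mul]
    ring
  · simp only [sInt, SignedMeasure.toJordanDecomposition_smul_real,
      JordanDecomposition.real_smul_posPart_neg _ _ hr,
      JordanDecomposition.real_smul_negPart_neg _ _ hr,
      smul_nn_measure, integral_smul_measure]
    simp only [ENNReal.coe_toReal, Real.coe_toNNReal _ (by linarith : (0:ℝ) ≤ -r), smul_eq_mul]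
    ring

lemma sInt_sub (μ ν : SignedMeasure X) {f : X → ℝ} (hf : Continuous f) :
    sInt (μ - ν) f = sInt μ f - sInt ν f := by
  have h : μ - ν = μ + (-1 : ℝ) • ν := by
    rw [neg_one_smul ℝ ν]; abel
  rw [h, sInt_add _ _ hf, sInt_smul]; ring

lemma sInt_toSignedMeasure (m : Measure X) [IsFiniteMeasure m] (f : X → ℝ) :
    sInt m.toSignedMeasure f = ∫ x, f x ∂m := by
  have h : m.toSignedMeasure.toJordanDecomposition
      = ⟨m, 0, Measure.MutuallySingular.zero_right⟩ :=
    SignedMeasure.toJordanDecomposition_eq (by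
      simp [JordanDecomposition.toSignedMeasure, Measure.toSignedMeasure_zero])
  rw [sInt, h]
  simp

end Aux

section Main

variable {X : Type*} [MetricSpace X] [CompactSpace X] [MeasurableSpace X] [BorelSpace X]

lemma sInt_fun_comb (μ : SignedMeasure X) {f g : X → ℝ} (hf : Continuous f)
    (hg : Continuous g) (t : ℝ) :
    sInt μ (fun a => f a + t * g a) = sInt μ f + t * sInt μ g := by
  simp only [sInt]
  rw [integral_add (cInt hf _) ((cInt hg _).const_mul t),
      integral_add (cInt hf _) ((cInt hg _).const_mul t),
      integral_const_mul, integral_const_mul]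
  ring

lemma contd (a : X) : Continuous (fun y : X => dist a y) :=
  continuous_const.dist continuous_id

lemma int_dist_continuous (m : Measure X) [IsFiniteMeasure m] :
    Continuous (fun x => ∫ y, dist x y ∂m) := by
  have hL : LipschitzWith (m Set.univ).toNNReal (fun x => ∫ y, dist x y ∂m) := by
    apply LipschitzWith.of_dist_le_mul
    intro a b
    rw [Real.dist_eq, ← integral_sub (cInt (contd a) m) (cInt (contd b) m)]
    calc |∫ y, (dist a y - dist b y) ∂m| ≤ ∫ y, |dist a y - dist b y| ∂m := by
          simpa [Real.norm_eq_abs] using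
            norm_integral_le_integral_norm (μ := m) (fun y => dist a y - dist b y)
      _ ≤ ∫ _y, dist a b ∂m := by
          refine integral_mono ((cInt (contd a) m).sub (cInt (contd b) m)).abs (integrable_const _)
            (fun y => abs_dist_sub_le a b y)
      _ = (m Set.univ).toReal * dist a b := by
          rw [integral_const, smul_eq_mul]
          rfl
  exact hL.continuous

lemma dPot_cont (τ : SignedMeasure X) : Continuous (dPot (fun x y => dist x y) τ) := by
  show Continuous fun x =>
    (∫ y, dist x y ∂τ.toJordanDecomposition.posPart)
      - ∫ y, dist x y ∂τ.toJordanDecomposition.negPart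
  exact (int_dist_continuous _).sub (int_dist_continuous _)

set_option maxHeartbeats 1000000 in
theorem stmt0' (μ : SignedMeasure X) (hμ : μ Set.univ = (1 : ℝ))
    (hmax : IsLUB (MSet X) (en (fun x y => dist x y) μ μ)) :
    ∀ x : X, dPot (fun x y => dist x y) μ x = en (fun x y => dist x y) μ μ := by
  intro x
  set d : X → X → ℝ := fun x y => dist x y with hd
  set I : ℝ := en d μ μ with hI
  set Dx : SignedMeasure X := (Measure.dirac x).toSignedMeasure with hDx
  set σ : SignedMeasure X := Dx - μ with hσ
  have hc : ∀ a : X, Continuous (fun y => d a y) := fun a => contd a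
  have hcx : Continuous (fun a => d a x) := continuous_id.dist continuous_const
  have hfμ : Continuous (dPot d μ) := dPot_cont μ
  have hfσ : Continuous (dPot d σ) := dPot_cont σ
  have hDx1 : Dx Set.univ = 1 := by
    rw [hDx, Measure.toSignedMeasure_apply_measurable MeasurableSet.univ]; simp
  have hσ0 : σ Set.univ = 0 := by
    rw [hσ, VectorMeasure.sub_apply, hDx1, hμ]; ring
  have hIμ : sInt μ (dPot d μ) = I := rfl
  -- the potential of σ
  have hg : ∀ a, dPot d σ a = d a x - dPot d μ a := by
    intro a
    rw [dPot, hσ, sInt_sub _ _ (hc a), hDx, sInt_toSignedMeasure, integral_dirac]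
    rfl
  have hdistx : sInt μ (fun a => d a x) = dPot d μ x := by
    rw [dPot]
    congr 1
    funext a
    exact dist_comm a x
  set c : ℝ := dPot d μ x - I with hc0
  have hB1 : sInt μ (dPot d σ) = c := by
    have h1 : dPot d σ = fun a => (fun a => d a x) a + (-1 : ℝ) * dPot d μ a := by
      funext a; rw [hg a]; ring
    rw [h1, sInt_fun_comb μ hcx hfμ, hdistx, hIμ]; ring
  have hB2 : sInt σ (dPot d μ) = c := by
    rw [hσ, sInt_sub _ _ hfμ, hDx, sInt_toSignedMeasure, integral_dirac, hIμ]
  set K : ℝ := sInt σ (dPot d σ) with hK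
  -- expansion of the energy of the perturbed measure
  have expand : ∀ t : ℝ, en d (μ + t • σ) (μ + t • σ) = I + t * (2 * c) + t ^ 2 * K := by
    intro t
    have hinner : (fun a => sInt (μ + t • σ) (fun y => d a y))
        = fun a => dPot d μ a + t * dPot d σ a := by
      funext a
      rw [sInt_add _ _ (hc a), sInt_smul]
      rfl
    have hFc : Continuous (fun a => dPot d μ a + t * dPot d σ a) :=
      hfμ.add (continuous_const.mul hfσ)
    rw [en, hinner, sInt_add _ _ hFc, sInt_smul,
      sInt_fun_comb μ hfμ hfσ, sInt_fun_comb σ hfμ hfσ, hIμ, hB1, hB2]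
    ring
  -- maximality
  have hle : ∀ t : ℝ, I + t * (2 * c) + t ^ 2 * K ≤ I := by
    intro t
    rw [← expand t]
    refine hmax.1 ⟨μ + t • σ, ?_, rfl⟩
    rw [VectorMeasure.add_apply, VectorMeasure.smul_apply, hμ, hσ0]
    simp
  -- conclude c = 0
  have hc0' : c = 0 := by
    by_contra hne
    have ht := hle (c / (|K| + 1))
    have hK1 : (0:ℝ) < |K| + 1 := by positivity
    have hKle : -(|K|) ≤ K := neg_abs_le K
    have hcsq : 0 < c ^ 2 := by positivity
    have hne0 : |K| + 1 ≠ 0 := ne_of_gt hK1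
    have h2 : c / (|K| + 1) * (2 * c) + (c / (|K| + 1)) ^ 2 * K ≤ 0 := by linarith
    have h4 := mul_le_mul_of_nonneg_left h2 (le_of_lt (mul_pos hK1 hK1))
    rw [mul_zero] at h4
    have h5 : (|K| + 1) * (|K| + 1)
        * (c / (|K| + 1) * (2 * c) + (c / (|K| + 1)) ^ 2 * K)
        = 2 * c ^ 2 * (|K| + 1) + c ^ 2 * K := by
      field_simp
    rw [h5] at h4
    nlinarith [mul_le_mul_of_nonneg_left hKle (sq_nonneg c),
      mul_nonneg (sq_nonneg c) (abs_nonneg K)]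
  have : dPot d μ x - I = 0 := hc0' ▸ rfl
  linarith

end Main


/-- If `μ` is a maximal mass-one signed measure (its energy is the supremum `M(X)`),
then its potential `d_μ` is constant on `X` with value `M(X) = I(μ)`. -/
theorem stmt0 {X : Type*} [MetricSpace X] [CompactSpace X] [MeasurableSpace X] [BorelSpace X]
    (μ : SignedMeasure X) (hμ : μ Set.univ = (1 : ℝ))
    (hmax : IsLUB (MSet X) (en (fun x y => dist x y) μ μ)) :
    ∀ x : X, dPot (fun x y => dist x y) μ x = en (fun x y => dist x y) μ μ :=
  stmt0' μ hμ hmax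
end

section
/- For the interval X = [a, b] with a < b and the metric d(x, y) = |x − y|, one has M(X) = (b − a)/2, i.e., sup{∫∫ |x−y| dμ(x)dμ(y) : μ a signed Borel measure of total mass 1} = (b−a)/2. -/
open MeasureTheory

namespace Stmt4Aux
open Set

variable {a b : ℝ}

/-- indicator kernel -/
noncomputable def cc (t : ℝ) (x : ↥(Set.Icc a b)) : ℝ := if t < (x : ℝ) then 1 else 0

lemma cc_cases (t : ℝ) (x : ↥(Set.Icc a b)) : cc t x = 0 ∨ cc t x = 1 := by
  unfold cc; split <;> simp

lemma abs_cc_le (t : ℝ) (x : ↥(Set.Icc a b)) : |cc t x| ≤ 1 := by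
  rcases cc_cases t x with h | h <;> rw [h] <;> norm_num

lemma measurable_cc_uncurry :
    Measurable (Function.uncurry (fun t (x : ↥(Set.Icc a b)) => cc t x)) := by
  have hs : MeasurableSet {p : ℝ × ↥(Set.Icc a b) | p.1 < (p.2 : ℝ)} :=
    measurableSet_lt measurable_fst (measurable_subtype_coe.comp measurable_snd)
  exact Measurable.ite hs measurable_const measurable_const

lemma measurable_cc_right (t : ℝ) : Measurable (fun x : ↥(Set.Icc a b) => cc t x) := by
  have hs : MeasurableSet {x : ↥(Set.Icc a b) | t < (x : ℝ)} :=
    measurable_subtype_coe measurableSet_Ioi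
  exact Measurable.ite hs measurable_const measurable_const

lemma cc_eq_indicator (x : ↥(Set.Icc a b)) :
    (fun t => cc t x) = (Set.Iio (x : ℝ)).indicator (fun _ => (1:ℝ)) := by
  funext t
  simp only [cc, Set.indicator_apply, Set.mem_Iio]

lemma cc_mul_eq_indicator (x y : ↥(Set.Icc a b)) :
    (fun t => cc t x * cc t y) = (Set.Iio (min (x:ℝ) (y:ℝ))).indicator (fun _ => (1:ℝ)) := by
  funext t
  simp only [cc, Set.indicator_apply, Set.mem_Iio, lt_min_iff]
  by_cases h1 : t < (x:ℝ) <;> by_cases h2 : t < (y:ℝ) <;> simp [h1, h2]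

lemma integral_indicator_Iio {r : ℝ} (h1 : a ≤ r) (h2 : r ≤ b) :
    ∫ t in Set.Ioc a b, (Set.Iio r).indicator (fun _ => (1:ℝ)) t = r - a := by
  rw [setIntegral_indicator measurableSet_Iio]
  have : Set.Ioc a b ∩ Set.Iio r = Set.Ioo a r := by
    ext t
    simp only [Set.mem_inter_iff, Set.mem_Ioc, Set.mem_Iio, Set.mem_Ioo]
    constructor
    · rintro ⟨⟨h3, _⟩, h5⟩; exact ⟨h3, h5⟩
    · rintro ⟨h3, h4⟩; exact ⟨⟨h3, le_trans h4.le h2⟩, h4⟩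
  rw [this, setIntegral_const, Real.volume_real_Ioo_of_le (by linarith), smul_eq_mul,
    mul_one]

lemma integrableOn_indicator_Iio (r : ℝ) :
    IntegrableOn ((Set.Iio r).indicator (fun _ => (1:ℝ))) (Set.Ioc a b) volume := by
  rw [IntegrableOn, integrable_indicator_iff measurableSet_Iio]
  exact integrableOn_const (by
    rw [Measure.restrict_apply measurableSet_Iio]
    exact (lt_of_le_of_lt (measure_mono Set.inter_subset_right) measure_Ioc_lt_top).ne)

lemma kernel_identity (x y : ↥(Set.Icc a b)) :
    |(x : ℝ) - (y : ℝ)| =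
      ∫ t in Set.Ioc a b, (cc t x + cc t y - 2 * (cc t x * cc t y)) := by
  have hx := x.2
  have hy := y.2
  have hix := integrableOn_indicator_Iio (a := a) (b := b) (x:ℝ)
  have hiy := integrableOn_indicator_Iio (a := a) (b := b) (y:ℝ)
  have him := integrableOn_indicator_Iio (a := a) (b := b) (min (x:ℝ) (y:ℝ))
  rw [show (fun t => cc t x + cc t y - 2 * (cc t x * cc t y)) =
      (fun t => ((Set.Iio (x:ℝ)).indicator (fun _ => (1:ℝ)) t
        + (Set.Iio (y:ℝ)).indicator (fun _ => (1:ℝ)) t)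
        - 2 * (Set.Iio (min (x:ℝ) (y:ℝ))).indicator (fun _ => (1:ℝ)) t) by
    funext t
    rw [← congrFun (cc_eq_indicator x) t, ← congrFun (cc_eq_indicator y) t,
      ← congrFun (cc_mul_eq_indicator x y) t]]
  have hadd : IntegrableOn (fun t => (Set.Iio (x:ℝ)).indicator (fun _ => (1:ℝ)) t
      + (Set.Iio (y:ℝ)).indicator (fun _ => (1:ℝ)) t) (Set.Ioc a b) volume := by
    exact hix.add hiy
  have hmul : IntegrableOn (fun t =>
      2 * (Set.Iio (min (x:ℝ) (y:ℝ))).indicator (fun _ => (1:ℝ)) t) (Set.Ioc a b) volume := by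
    exact him.const_mul 2
  rw [integral_sub hadd hmul, integral_add hix hiy,
    integral_const_mul, integral_indicator_Iio hx.1 hx.2, integral_indicator_Iio hy.1 hy.2,
    integral_indicator_Iio (le_min hx.1 hy.1) (min_le_of_left_le hx.2)]
  rcases le_total (x:ℝ) (y:ℝ) with h | h
  · rw [min_eq_left h, abs_of_nonpos (by linarith)]; ring
  · rw [min_eq_right h, abs_of_nonneg (by linarith)]; ring

/-- restricted Lebesgue measure on `(a,b]` is finite -/
lemma finite_restrict : IsFiniteMeasure (volume.restrict (Set.Ioc a b)) :=
  ⟨by rw [Measure.restrict_apply_univ]; exact measure_Ioc_lt_top⟩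

/-- `Qf q t = q {x > t}` as a real integral. -/
noncomputable def Qf (q : Measure ↥(Set.Icc a b)) (t : ℝ) : ℝ := ∫ x, cc t x ∂q

lemma measurable_Qf (q : Measure ↥(Set.Icc a b)) [SFinite q] : Measurable (Qf q) :=
  (measurable_cc_uncurry.stronglyMeasurable.integral_prod_right (ν := q)).measurable

lemma integrable_cc (q : Measure ↥(Set.Icc a b)) [IsFiniteMeasure q] (t : ℝ) :
    Integrable (fun x => cc t x) q :=
  (integrable_const (1:ℝ)).mono' (measurable_cc_right t).aestronglyMeasurable
    (Filter.Eventually.of_forall fun x => by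
      rw [Real.norm_eq_abs]; exact abs_cc_le t x)

lemma abs_Qf_le (q : Measure ↥(Set.Icc a b)) [IsFiniteMeasure q] (t : ℝ) :
    |Qf q t| ≤ (q Set.univ).toReal := by
  have := norm_integral_le_of_norm_le_const (μ := q) (f := fun x => cc t x) (C := 1)
    (Filter.Eventually.of_forall fun x => by rw [Real.norm_eq_abs]; exact abs_cc_le t x)
  simpa [Qf, measureReal_def] using this

lemma abs3 (A B C : ℝ) : |A + B - C| ≤ |A| + |B| + |C| :=
  abs_le.2 ⟨by linarith [neg_abs_le A, neg_abs_le B, le_abs_self C],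
    by linarith [le_abs_self A, le_abs_self B, neg_abs_le C]⟩

/-- inner evaluation: integrate the kernel in `y` against `r` -/
lemma inner_eval (r : Measure ↥(Set.Icc a b)) [IsFiniteMeasure r] (t : ℝ)
    (x : ↥(Set.Icc a b)) :
    ∫ y, (cc t x + cc t y - 2 * (cc t x * cc t y)) ∂r
      = cc t x * (r Set.univ).toReal + Qf r t - 2 * (cc t x * Qf r t) := by
  have h1 : Integrable (fun y : ↥(Set.Icc a b) => cc t x + cc t y) r := by
    exact (integrable_const _).add (integrable_cc r t)
  have h2 : Integrable (fun y : ↥(Set.Icc a b) => 2 * (cc t x * cc t y)) r := by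
    exact ((integrable_cc r t).const_mul _).const_mul 2
  rw [integral_sub h1 h2, integral_add (integrable_const _) (integrable_cc r t)]
  have h3 : ∫ y : ↥(Set.Icc a b), 2 * (cc t x * cc t y) ∂r = 2 * (cc t x * Qf r t) := by
    rw [integral_const_mul, integral_const_mul]; rfl
  rw [h3, integral_const, smul_eq_mul, mul_comm]
  rfl

/-- outer evaluation -/
lemma outer_eval (q r : Measure ↥(Set.Icc a b)) [IsFiniteMeasure q] [IsFiniteMeasure r]
    (t : ℝ) :
    ∫ x, (cc t x * (r Set.univ).toReal + Qf r t - 2 * (cc t x * Qf r t)) ∂q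
      = (r Set.univ).toReal * Qf q t + (q Set.univ).toReal * Qf r t
        - 2 * (Qf q t * Qf r t) := by
  have h1 : Integrable (fun x : ↥(Set.Icc a b) =>
      cc t x * (r Set.univ).toReal + Qf r t) q := by
    exact ((integrable_cc q t).mul_const _).add (integrable_const _)
  have h2 : Integrable (fun x : ↥(Set.Icc a b) => 2 * (cc t x * Qf r t)) q := by
    exact (((integrable_cc q t).mul_const _)).const_mul 2
  rw [integral_sub h1 h2,
    integral_add ((integrable_cc q t).mul_const _) (integrable_const _)]
  have h3 : ∫ x : ↥(Set.Icc a b), 2 * (cc t x * Qf r t) ∂q = 2 * (Qf q t * Qf r t) := by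
    rw [integral_const_mul]
    rw [show (fun x : ↥(Set.Icc a b) => cc t x * Qf r t)
        = fun x => Qf r t * cc t x by funext x; ring, integral_const_mul]
    show 2 * (Qf r t * Qf q t) = _
    ring
  rw [h3, integral_mul_const, integral_const, smul_eq_mul]
  show Qf q t * (r Set.univ).toReal + (q Set.univ).toReal * Qf r t - _ = _
  ring

lemma measurable_cc_left (x : ↥(Set.Icc a b)) : Measurable (fun t => cc t x) := by
  rw [cc_eq_indicator]
  exact measurable_const.indicator measurableSet_Iio

lemma double_integral (q r : Measure ↥(Set.Icc a b)) [IsFiniteMeasure q] [IsFiniteMeasure r] :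
    ∫ x, ∫ y, |(x : ℝ) - (y : ℝ)| ∂r ∂q
      = ∫ t in Set.Ioc a b, ((r Set.univ).toReal * Qf q t + (q Set.univ).toReal * Qf r t
          - 2 * (Qf q t * Qf r t)) := by
  haveI := finite_restrict (a := a) (b := b)
  set mr := (r Set.univ).toReal with hmr
  -- Step A : inner double integral, for fixed x
  have hA : ∀ x : ↥(Set.Icc a b), ∫ y, |(x : ℝ) - (y : ℝ)| ∂r
      = ∫ t in Set.Ioc a b, (cc t x * mr + Qf r t - 2 * (cc t x * Qf r t)) := by
    intro x
    have e1 : ∫ y, |(x : ℝ) - (y : ℝ)| ∂r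
        = ∫ y, (∫ t in Set.Ioc a b, (cc t x + cc t y - 2 * (cc t x * cc t y))) ∂r :=
      integral_congr_ae (Filter.Eventually.of_forall fun y => kernel_identity x y)
    have hm : Measurable (Function.uncurry fun (y : ↥(Set.Icc a b)) (t : ℝ) =>
        cc t x + cc t y - 2 * (cc t x * cc t y)) := by
      have m1 : Measurable fun p : ↥(Set.Icc a b) × ℝ => cc p.2 x :=
        (measurable_cc_left x).comp measurable_snd
      have m2 : Measurable fun p : ↥(Set.Icc a b) × ℝ => cc p.2 p.1 :=
        measurable_cc_uncurry.comp measurable_swap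
      exact (m1.add m2).sub ((m1.mul m2).const_mul 2)
    have hint : Integrable (Function.uncurry fun (y : ↥(Set.Icc a b)) (t : ℝ) =>
        cc t x + cc t y - 2 * (cc t x * cc t y)) (r.prod (volume.restrict (Set.Ioc a b))) := by
      refine (integrable_const (4:ℝ)).mono' hm.aestronglyMeasurable
        (Filter.Eventually.of_forall fun p => ?_)
      rw [Real.norm_eq_abs]
      calc |cc p.2 x + cc p.2 p.1 - 2 * (cc p.2 x * cc p.2 p.1)|
          ≤ |cc p.2 x| + |cc p.2 p.1| + |2 * (cc p.2 x * cc p.2 p.1)| := abs3 _ _ _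
        _ ≤ 1 + 1 + 2 * (1 * 1) := by
            refine add_le_add (add_le_add (abs_cc_le _ _) (abs_cc_le _ _)) ?_
            rw [abs_mul, abs_mul, abs_two]
            exact mul_le_mul_of_nonneg_left
              (mul_le_mul (abs_cc_le _ _) (abs_cc_le _ _) (abs_nonneg _) zero_le_one)
              (by norm_num)
        _ ≤ 4 := by norm_num
    rw [e1, integral_integral_swap hint]
    exact integral_congr_ae (Filter.Eventually.of_forall fun t => inner_eval r t x)
  rw [integral_congr_ae (Filter.Eventually.of_forall hA)]
  -- Step B : swap x and t
  have hm2 : Measurable (Function.uncurry fun (x : ↥(Set.Icc a b)) (t : ℝ) =>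
      cc t x * mr + Qf r t - 2 * (cc t x * Qf r t)) := by
    have m1 : Measurable fun p : ↥(Set.Icc a b) × ℝ => cc p.2 p.1 :=
      measurable_cc_uncurry.comp measurable_swap
    have m2 : Measurable fun p : ↥(Set.Icc a b) × ℝ => Qf r p.2 :=
      (measurable_Qf r).comp measurable_snd
    exact ((m1.mul_const mr).add m2).sub ((m1.mul m2).const_mul 2)
  have hint2 : Integrable (Function.uncurry fun (x : ↥(Set.Icc a b)) (t : ℝ) =>
      cc t x * mr + Qf r t - 2 * (cc t x * Qf r t))
      (q.prod (volume.restrict (Set.Ioc a b))) := by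
    refine (integrable_const (4 * mr)).mono' hm2.aestronglyMeasurable
      (Filter.Eventually.of_forall fun p => ?_)
    rw [Real.norm_eq_abs]
    have hmr0 : 0 ≤ mr := ENNReal.toReal_nonneg
    have hq1 : |Qf r p.2| ≤ mr := abs_Qf_le r p.2
    calc |cc p.2 p.1 * mr + Qf r p.2 - 2 * (cc p.2 p.1 * Qf r p.2)|
        ≤ |cc p.2 p.1 * mr| + |Qf r p.2| + |2 * (cc p.2 p.1 * Qf r p.2)| := abs3 _ _ _
      _ ≤ 1 * mr + mr + 2 * (1 * mr) := by
          refine add_le_add (add_le_add ?_ hq1) ?_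
          · rw [abs_mul, abs_of_nonneg hmr0]
            exact mul_le_mul_of_nonneg_right (abs_cc_le _ _) hmr0
          · rw [abs_mul, abs_mul, abs_two]
            exact mul_le_mul_of_nonneg_left
              (mul_le_mul (abs_cc_le _ _) hq1 (abs_nonneg _) zero_le_one) (by norm_num)
      _ ≤ 4 * mr := by linarith
  rw [integral_integral_swap hint2]
  exact integral_congr_ae (Filter.Eventually.of_forall fun t => outer_eval q r t)

lemma measurable_abs_sub :
    Measurable (Function.uncurry fun (x y : ↥(Set.Icc a b)) => |(x : ℝ) - (y : ℝ)|) :=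
  (((measurable_subtype_coe.comp measurable_fst).sub
    (measurable_subtype_coe.comp measurable_snd))).abs

lemma integrable_pot (q r : Measure ↥(Set.Icc a b)) [IsFiniteMeasure q] [IsFiniteMeasure r] :
    Integrable (fun x : ↥(Set.Icc a b) => ∫ y, |(x : ℝ) - (y : ℝ)| ∂r) q := by
  refine (integrable_const ((|a| + |b|) * 2 * (r Set.univ).toReal)).mono'
    ((measurable_abs_sub.stronglyMeasurable.integral_prod_right (ν := r)).measurable).aestronglyMeasurable
    (Filter.Eventually.of_forall fun x => ?_)
  rw [Real.norm_eq_abs, abs_of_nonneg (integral_nonneg fun y => abs_nonneg _)]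
  have := norm_integral_le_of_norm_le_const (μ := r)
    (f := fun y : ↥(Set.Icc a b) => |(x : ℝ) - (y : ℝ)|) (C := |a| + |b| + (|a| + |b|))
    (Filter.Eventually.of_forall fun y => by
      rw [Real.norm_eq_abs, abs_abs]
      have hx := abs_le_max_abs_abs x.2.1 x.2.2
      have hy := abs_le_max_abs_abs y.2.1 y.2.2
      have h1 : |(x:ℝ)| ≤ |a| + |b| := le_trans hx (max_le (le_add_of_nonneg_right (abs_nonneg b)) (le_add_of_nonneg_left (abs_nonneg a)))
      have h2 : |(y:ℝ)| ≤ |a| + |b| := le_trans hy (max_le (le_add_of_nonneg_right (abs_nonneg b)) (le_add_of_nonneg_left (abs_nonneg a)))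
      calc |(x:ℝ) - (y:ℝ)| ≤ |(x:ℝ)| + |(y:ℝ)| := abs_sub _ _
        _ ≤ _ := add_le_add h1 h2)
  calc ∫ y, |(x : ℝ) - (y : ℝ)| ∂r ≤ |∫ y, |(x : ℝ) - (y : ℝ)| ∂r| := le_abs_self _
    _ ≤ (|a| + |b| + (|a| + |b|)) * (r Set.univ).toReal := by
        rw [← Real.norm_eq_abs]; exact this
    _ = (|a| + |b|) * 2 * (r Set.univ).toReal := by ring

lemma integrable_combo (q r : Measure ↥(Set.Icc a b)) [IsFiniteMeasure q] [IsFiniteMeasure r] :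
    IntegrableOn (fun t => (r Set.univ).toReal * Qf q t + (q Set.univ).toReal * Qf r t
      - 2 * (Qf q t * Qf r t)) (Set.Ioc a b) volume := by
  haveI := finite_restrict (a := a) (b := b)
  set mq := (q Set.univ).toReal
  set mr := (r Set.univ).toReal
  have hmq : 0 ≤ mq := ENNReal.toReal_nonneg
  have hmr : 0 ≤ mr := ENNReal.toReal_nonneg
  have hmeas : Measurable (fun t => mr * Qf q t + mq * Qf r t - 2 * (Qf q t * Qf r t)) := by
    exact (((measurable_Qf q).const_mul mr).add ((measurable_Qf r).const_mul mq)).sub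
      (((measurable_Qf q).mul (measurable_Qf r)).const_mul 2)
  refine (integrable_const (mr * mq + mq * mr + 2 * (mq * mr))).mono'
    hmeas.aestronglyMeasurable (Filter.Eventually.of_forall fun t => ?_)
  rw [Real.norm_eq_abs]
  have h1 : |Qf q t| ≤ mq := abs_Qf_le q t
  have h2 : |Qf r t| ≤ mr := abs_Qf_le r t
  calc |mr * Qf q t + mq * Qf r t - 2 * (Qf q t * Qf r t)|
      ≤ |mr * Qf q t| + |mq * Qf r t| + |2 * (Qf q t * Qf r t)| := abs3 _ _ _
    _ ≤ mr * mq + mq * mr + 2 * (mq * mr) := by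
        refine add_le_add (add_le_add ?_ ?_) ?_
        · rw [abs_mul, abs_of_nonneg hmr]; exact mul_le_mul_of_nonneg_left h1 hmr
        · rw [abs_mul, abs_of_nonneg hmq]; exact mul_le_mul_of_nonneg_left h2 hmq
        · rw [abs_mul, abs_mul, abs_two]
          exact mul_le_mul_of_nonneg_left
            (mul_le_mul h1 h2 (abs_nonneg _) hmq) (by norm_num)

lemma en_le (hab : a < b) (μ : SignedMeasure ↥(Set.Icc a b)) (h1 : μ Set.univ = (1:ℝ)) :
    en (fun x y => dist x y) μ μ ≤ (b - a) / 2 := by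
  set p := μ.toJordanDecomposition.posPart with hp
  set n := μ.toJordanDecomposition.negPart with hn
  -- total mass
  have hmass : (p Set.univ).toReal - (n Set.univ).toReal = 1 := by
    have h3 := μ.toSignedMeasure_toJordanDecomposition
    have h4 : μ.toJordanDecomposition.toSignedMeasure Set.univ
        = (p Set.univ).toReal - (n Set.univ).toReal := by
      rw [JordanDecomposition.toSignedMeasure]
      rw [VectorMeasure.sub_apply,
        Measure.toSignedMeasure_apply_measurable MeasurableSet.univ,
        Measure.toSignedMeasure_apply_measurable MeasurableSet.univ]
      rfl
    rw [← h4, h3, h1]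
  have hdist : (fun (x y : ↥(Set.Icc a b)) => dist x y)
      = fun (x y : ↥(Set.Icc a b)) => |(x : ℝ) - (y : ℝ)| := by
    funext x y; rw [Subtype.dist_eq, Real.dist_eq]
  have expand : en (fun x y => dist x y) μ μ
      = ((∫ x, (∫ y, |(x:ℝ) - (y:ℝ)| ∂p) ∂p) - ∫ x, (∫ y, |(x:ℝ) - (y:ℝ)| ∂n) ∂p)
        - ((∫ x, (∫ y, |(x:ℝ) - (y:ℝ)| ∂p) ∂n) - ∫ x, (∫ y, |(x:ℝ) - (y:ℝ)| ∂n) ∂n) := by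
    rw [hdist, en]
    show (∫ x, ((∫ y, |(x:ℝ) - (y:ℝ)| ∂p) - ∫ y, |(x:ℝ) - (y:ℝ)| ∂n) ∂p)
        - (∫ x, ((∫ y, |(x:ℝ) - (y:ℝ)| ∂p) - ∫ y, |(x:ℝ) - (y:ℝ)| ∂n) ∂n) = _
    rw [integral_sub (integrable_pot p p) (integrable_pot p n),
      integral_sub (integrable_pot n p) (integrable_pot n n)]
  haveI := finite_restrict (a := a) (b := b)
  have c1 : Integrable (fun t => ((p Set.univ).toReal * Qf p t + (p Set.univ).toReal * Qf p t
      - 2 * (Qf p t * Qf p t))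
      - ((n Set.univ).toReal * Qf p t + (p Set.univ).toReal * Qf n t - 2 * (Qf p t * Qf n t)))
      (volume.restrict (Set.Ioc a b)) := by
    exact (integrable_combo p p).sub (integrable_combo p n)
  have c2 : Integrable (fun t => ((p Set.univ).toReal * Qf n t + (n Set.univ).toReal * Qf p t
      - 2 * (Qf n t * Qf p t))
      - ((n Set.univ).toReal * Qf n t + (n Set.univ).toReal * Qf n t - 2 * (Qf n t * Qf n t)))
      (volume.restrict (Set.Ioc a b)) := by
    exact (integrable_combo n p).sub (integrable_combo n n)
  have key : ∀ MP MN P N : ℝ, MP - MN = 1 →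
      (MP * P + MP * P - 2 * (P * P)) - (MN * P + MP * N - 2 * (P * N))
        - ((MP * N + MN * P - 2 * (N * P)) - (MN * N + MN * N - 2 * (N * N))) ≤ 1/2 := by
    intro MP MN P N h
    have hMP : MP = MN + 1 := by linarith
    subst hMP
    nlinarith [sq_nonneg (2 * (P - N) - 1)]
  calc en (fun x y => dist x y) μ μ
      = ∫ t in Set.Ioc a b,
          (((p Set.univ).toReal * Qf p t + (p Set.univ).toReal * Qf p t - 2 * (Qf p t * Qf p t))
            - ((n Set.univ).toReal * Qf p t + (p Set.univ).toReal * Qf n t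
                - 2 * (Qf p t * Qf n t))
          - (((p Set.univ).toReal * Qf n t + (n Set.univ).toReal * Qf p t
                - 2 * (Qf n t * Qf p t))
            - ((n Set.univ).toReal * Qf n t + (n Set.univ).toReal * Qf n t
                - 2 * (Qf n t * Qf n t)))) := by
        rw [expand, double_integral p p, double_integral p n, double_integral n p,
          double_integral n n, integral_sub c1 c2,
          integral_sub (integrable_combo p p) (integrable_combo p n),
          integral_sub (integrable_combo n p) (integrable_combo n n)]
    _ ≤ ∫ _t in Set.Ioc a b, ((1:ℝ)/2) := by
        refine integral_mono (c1.sub c2) (integrable_const _) fun t => ?_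
        exact key _ _ _ _ hmass
    _ = (b - a) / 2 := by
        rw [setIntegral_const, Real.volume_real_Ioc_of_le (by linarith),
          smul_eq_mul]
        ring

lemma integrable_dirac_of_measurable {α : Type*} [MeasurableSpace α] {f : α → ℝ}
    (hf : Measurable f) (x : α) : Integrable f (Measure.dirac x) := by
  refine (integrable_const |f x|).mono' hf.aestronglyMeasurable ?_
  rw [ae_dirac_iff (measurableSet_le hf.norm measurable_const)]
  simp [Real.norm_eq_abs]

lemma mem_MSet (hab : a < b) : (b - a) / 2 ∈ MSet ↥(Set.Icc a b) := by
  set A : ↥(Set.Icc a b) := ⟨a, Set.left_mem_Icc.2 hab.le⟩ with hA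
  set B : ↥(Set.Icc a b) := ⟨b, Set.right_mem_Icc.2 hab.le⟩ with hB
  set m0 : Measure ↥(Set.Icc a b) := (2:ENNReal)⁻¹ • (Measure.dirac A + Measure.dirac B)
    with hm0
  have hm0univ : m0 Set.univ = 1 := by
    rw [hm0, Measure.smul_apply, Measure.add_apply, measure_univ, measure_univ, smul_eq_mul]
    rw [one_add_one_eq_two, ENNReal.inv_mul_cancel two_ne_zero ENNReal.ofNat_ne_top]
  haveI hfin : IsFiniteMeasure m0 := ⟨by rw [hm0univ]; exact ENNReal.one_lt_top⟩
  set j : JordanDecomposition ↥(Set.Icc a b) :=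
    { posPart := m0, negPart := 0,
      mutuallySingular := Measure.MutuallySingular.zero_right } with hj
  set μ0 := j.toSignedMeasure with hμ0
  have hjd : μ0.toJordanDecomposition = j := j.toJordanDecomposition_toSignedMeasure
  -- sInt against μ0
  have hsInt : ∀ f : ↥(Set.Icc a b) → ℝ, Measurable f → sInt μ0 f = (f A + f B) / 2 := by
    intro f hf
    rw [sInt, hjd]
    show (∫ x, f x ∂m0) - ∫ x, f x ∂(0 : Measure ↥(Set.Icc a b)) = _
    rw [integral_zero_measure, sub_zero, hm0, integral_smul_measure,
      integral_add_measure (integrable_dirac_of_measurable hf A)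
        (integrable_dirac_of_measurable hf B),
      integral_dirac' f A hf.stronglyMeasurable, integral_dirac' f B hf.stronglyMeasurable,
      smul_eq_mul]
    rw [ENNReal.toReal_inv]
    norm_num
    ring
  -- total mass
  have hμ0univ : μ0 Set.univ = (1:ℝ) := by
    have h4 : j.toSignedMeasure Set.univ
        = (m0 Set.univ).toReal - ((0 : Measure ↥(Set.Icc a b)) Set.univ).toReal := by
      rw [JordanDecomposition.toSignedMeasure]
      rw [VectorMeasure.sub_apply,
        Measure.toSignedMeasure_apply_measurable MeasurableSet.univ,
        Measure.toSignedMeasure_apply_measurable MeasurableSet.univ]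
      rfl
    rw [hμ0, h4, hm0univ]
    simp
  -- distances
  have hdAB : dist A B = b - a := by
    rw [Subtype.dist_eq, Real.dist_eq]
    show |a - b| = b - a
    rw [abs_of_nonpos (by linarith)]; ring
  have hdBA : dist B A = b - a := by rw [dist_comm]; exact hdAB
  have hmd : ∀ z : ↥(Set.Icc a b), Measurable fun y : ↥(Set.Icc a b) => dist z y := by
    intro z
    have : (fun y : ↥(Set.Icc a b) => dist z y) = fun y : ↥(Set.Icc a b) => |(z:ℝ) - (y:ℝ)| := by
      funext y; rw [Subtype.dist_eq, Real.dist_eq]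
    rw [this]
    exact (measurable_const.sub measurable_subtype_coe).abs
  -- energy
  refine ⟨μ0, hμ0univ, ?_⟩
  have hInner : (fun x => sInt μ0 (fun y => dist x y))
      = fun x : ↥(Set.Icc a b) => (dist x A + dist x B) / 2 := by
    funext x
    exact hsInt _ (hmd x)
  have hmg : Measurable fun x : ↥(Set.Icc a b) => (dist x A + dist x B) / 2 := by
    have h1 : (fun x : ↥(Set.Icc a b) => dist x A) = fun x : ↥(Set.Icc a b) => |(x:ℝ) - (A:ℝ)| := by
      funext x; rw [Subtype.dist_eq, Real.dist_eq]
    have h2 : (fun x : ↥(Set.Icc a b) => dist x B) = fun x : ↥(Set.Icc a b) => |(x:ℝ) - (B:ℝ)| := by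
      funext x; rw [Subtype.dist_eq, Real.dist_eq]
    have m1 : Measurable fun x : ↥(Set.Icc a b) => dist x A := by
      rw [h1]; exact (measurable_subtype_coe.sub measurable_const).abs
    have m2 : Measurable fun x : ↥(Set.Icc a b) => dist x B := by
      rw [h2]; exact (measurable_subtype_coe.sub measurable_const).abs
    exact (m1.add m2).div_const 2
  rw [en, hInner, hsInt _ hmg, dist_self, dist_self, hdAB, hdBA]
  ring

end Stmt4Aux

/-- For the interval `[a, b]` with the euclidean metric, `M([a,b]) = (b-a)/2`. -/
theorem stmt4 (a b : ℝ) (hab : a < b) :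
    IsLUB (MSet (Set.Icc a b)) ((b - a) / 2) := by
  constructor
  · rintro r ⟨μ, hμ, rfl⟩
    exact Stmt4Aux.en_le hab μ hμ
  · intro u hu
    exact hu (Stmt4Aux.mem_MSet hab)
end

section
/- Let (X, d₁), (Y, d₂) be disjoint compact quasihypermetric spaces with M(X), M(Y) < ∞, and let Z = X ∪ Y with the metric d agreeing with d₁ on X, d₂ on Y, and d(x, y) = c for x ∈ X, y ∈ Y, where 2c ≥ max(D(X), D(Y)). Then (Z, d) is quasihypermetric if and only if 2c ≥ M(X) + M(Y). -/
open MeasureTheory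

/-- The combined distance function on the disjoint union `X ⊕ Y`: it agrees with `d₁`
on `X`, with `d₂` on `Y`, and equals the constant `c` between `X` and `Y`. -/
def dJoin {X Y : Type*} (d₁ : X → X → ℝ) (d₂ : Y → Y → ℝ) (c : ℝ) :
    X ⊕ Y → X ⊕ Y → ℝ
  | .inl x, .inl x' => d₁ x x'
  | .inr y, .inr y' => d₂ y y'
  | _, _ => c

open Set
open scoped NNReal ENNReal

namespace Aux6

lemma me_inl {α β : Type*} [MeasurableSpace α] [MeasurableSpace β] :
    MeasurableEmbedding (@Sum.inl α β) :=
  ⟨Sum.inl_injective, measurable_inl, fun _ hs => measurableSet_inl_image.2 hs⟩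

lemma me_inr {α β : Type*} [MeasurableSpace α] [MeasurableSpace β] :
    MeasurableEmbedding (@Sum.inr α β) :=
  ⟨Sum.inr_injective, measurable_inr, fun _ hs => measurableSet_inr_image.2 hs⟩

section Generic
variable {α : Type*} [MeasurableSpace α]

lemma integrable_of_bdd {Q : Measure α} [IsFiniteMeasure Q]
    {f : α → ℝ} (hf : Measurable f) {C : ℝ} (hC : ∀ x, |f x| ≤ C) : Integrable f Q :=
  Integrable.mono' (integrable_const C) hf.aestronglyMeasurable
    (ae_of_all _ fun x => by simpa using hC x)

lemma integral_abs_le {Q : Measure α} [IsFiniteMeasure Q]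
    {f : α → ℝ} {C : ℝ} (hC : ∀ x, |f x| ≤ C) :
    |∫ x, f x ∂Q| ≤ C * (Q univ).toReal := by
  rw [← Real.norm_eq_abs]
  refine norm_integral_le_of_norm_le_const (ae_of_all _ fun x => ?_)
  rw [Real.norm_eq_abs]; exact hC x

lemma massRepr (P N : Measure α) [IsFiniteMeasure P] [IsFiniteMeasure N]
    {s : Set α} (hs : MeasurableSet s) :
    (P.toSignedMeasure - N.toSignedMeasure) s = (P s).toReal - (N s).toReal := by
  rw [VectorMeasure.sub_apply, Measure.toSignedMeasure_apply_measurable hs,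
    Measure.toSignedMeasure_apply_measurable hs]
  rfl

lemma jordan_spec (μ : SignedMeasure α) :
    μ = μ.toJordanDecomposition.posPart.toSignedMeasure
      - μ.toJordanDecomposition.negPart.toSignedMeasure :=
  (μ.toSignedMeasure_toJordanDecomposition).symm

lemma sInt_repr (P N : Measure α) [IsFiniteMeasure P] [IsFiniteMeasure N]
    {f : α → ℝ} (hf : Measurable f) {C : ℝ} (hC : ∀ x, |f x| ≤ C)
    {μ : SignedMeasure α} (hμ : μ = P.toSignedMeasure - N.toSignedMeasure) :
    sInt μ f = (∫ x, f x ∂P) - ∫ x, f x ∂N := by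
  set Pp := μ.toJordanDecomposition.posPart with hPp
  set Np := μ.toJordanDecomposition.negPart with hNp
  have hkey : Pp + N = Np + P := by
    rw [← Measure.toSignedMeasure_eq_toSignedMeasure_iff,
      Measure.toSignedMeasure_add, Measure.toSignedMeasure_add]
    have h1 : Pp.toSignedMeasure - Np.toSignedMeasure = P.toSignedMeasure - N.toSignedMeasure := by
      rw [← jordan_spec μ] at *
      exact hμ
    exact (sub_eq_sub_iff_add_eq_add.mp h1).trans (add_comm _ _)
  have hiP : Integrable f P := integrable_of_bdd hf hC
  have hiN : Integrable f N := integrable_of_bdd hf hC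
  have hiPp : Integrable f Pp := integrable_of_bdd hf hC
  have hiNp : Integrable f Np := integrable_of_bdd hf hC
  have h2 : (∫ x, f x ∂Pp) + ∫ x, f x ∂N = (∫ x, f x ∂Np) + ∫ x, f x ∂P := by
    rw [← integral_add_measure hiPp hiN, ← integral_add_measure hiNp hiP, hkey]
  simp only [sInt, ← hPp, ← hNp]
  linarith

lemma sInt_const_mul (μ : SignedMeasure α) (f : α → ℝ) (r : ℝ) :
    sInt μ (fun x => r * f x) = r * sInt μ f := by
  simp only [sInt, integral_const_mul]; ring

lemma sInt_neg (μ : SignedMeasure α) (f : α → ℝ) :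
    sInt (-μ) f = - sInt μ f := by
  simp only [sInt, SignedMeasure.toJordanDecomposition_neg,
    JordanDecomposition.neg_posPart, JordanDecomposition.neg_negPart]
  ring

lemma sInt_smul_nonneg (μ : SignedMeasure α) (f : α → ℝ) {r : ℝ} (hr : 0 ≤ r) :
    sInt (r • μ) f = r * sInt μ f := by
  simp only [sInt, SignedMeasure.toJordanDecomposition_smul_real,
    JordanDecomposition.real_smul_posPart_nonneg _ _ hr,
    JordanDecomposition.real_smul_negPart_nonneg _ _ hr, ENNReal.smul_def,
    integral_smul_measure, ENNReal.coe_toReal, Real.coe_toNNReal _ hr, smul_eq_mul]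
  ring

lemma sInt_smul (μ : SignedMeasure α) (f : α → ℝ) (r : ℝ) :
    sInt (r • μ) f = r * sInt μ f := by
  rcases le_or_gt 0 r with hr | hr
  · exact sInt_smul_nonneg μ f hr
  · have h1 : r • μ = -((-r) • μ) := by ext s hs; simp
    rw [h1, sInt_neg, sInt_smul_nonneg μ f (by linarith : (0:ℝ) ≤ -r)]
    ring


lemma mass_repr (P N : Measure α) [IsFiniteMeasure P] [IsFiniteMeasure N]
    {μ : SignedMeasure α} (hμ : μ = P.toSignedMeasure - N.toSignedMeasure) :
    μ univ = (P univ).toReal - (N univ).toReal := by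
  rw [hμ]; exact massRepr P N MeasurableSet.univ

end Generic

section SumSpace
variable {α β : Type*} [MeasurableSpace α] [MeasurableSpace β]

lemma isFiniteMeasure_comap_inl (Q : Measure (α ⊕ β)) [IsFiniteMeasure Q] :
    IsFiniteMeasure (Q.comap Sum.inl) := by
  constructor
  rw [me_inl.comap_apply]
  exact measure_lt_top Q _

lemma isFiniteMeasure_comap_inr (Q : Measure (α ⊕ β)) [IsFiniteMeasure Q] :
    IsFiniteMeasure (Q.comap Sum.inr) := by
  constructor
  rw [me_inr.comap_apply]
  exact measure_lt_top Q _

lemma sum_decomp (Q : Measure (α ⊕ β)) :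
    Q = (Q.comap Sum.inl).map Sum.inl + (Q.comap Sum.inr).map Sum.inr := by
  ext s hs
  rw [Measure.add_apply, me_inl.map_apply, me_inr.map_apply, me_inl.comap_apply,
    me_inr.comap_apply, Set.image_preimage_eq_inter_range, Set.image_preimage_eq_inter_range,
    ← measure_union (Disjoint.mono inter_subset_right inter_subset_right
      (Set.isCompl_range_inl_range_inr.disjoint))
      (hs.inter measurableSet_range_inr)]
  rw [← Set.inter_union_distrib_left, Set.range_inl_union_range_inr, Set.inter_univ]

lemma integral_sum_meas (Q : Measure (α ⊕ β)) [IsFiniteMeasure Q]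
    {f : α ⊕ β → ℝ} (hf : Measurable f) {C : ℝ} (hC : ∀ z, |f z| ≤ C) :
    ∫ z, f z ∂Q = (∫ x, f (Sum.inl x) ∂(Q.comap Sum.inl))
      + ∫ y, f (Sum.inr y) ∂(Q.comap Sum.inr) := by
  have hint : Integrable f ((Q.comap Sum.inl).map Sum.inl + (Q.comap Sum.inr).map Sum.inr) := by
    rw [← sum_decomp]; exact integrable_of_bdd hf hC
  obtain ⟨h1, h2⟩ := integrable_add_measure.mp hint
  have e : ∫ z, f z ∂Q
      = ∫ z, f z ∂((Q.comap Sum.inl).map Sum.inl + (Q.comap Sum.inr).map Sum.inr) := by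
    conv_lhs => rw [sum_decomp Q]
  rw [e, integral_add_measure h1 h2, me_inl.integral_map, me_inr.integral_map]

lemma comap_inl_univ (Q : Measure (α ⊕ β)) :
    Q.comap Sum.inl univ = Q (range Sum.inl) := by
  rw [me_inl.comap_apply, Set.image_univ]

lemma comap_inr_univ (Q : Measure (α ⊕ β)) :
    Q.comap Sum.inr univ = Q (range Sum.inr) := by
  rw [me_inr.comap_apply, Set.image_univ]

lemma univ_split (Q : Measure (α ⊕ β)) :
    Q univ = Q.comap Sum.inl univ + Q.comap Sum.inr univ := by
  rw [comap_inl_univ, comap_inr_univ,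
    ← measure_union Set.isCompl_range_inl_range_inr.disjoint measurableSet_range_inr,
    Set.range_inl_union_range_inr]

end SumSpace

section OneSpace
variable {X : Type*} [MetricSpace X] [CompactSpace X] [MeasurableSpace X] [BorelSpace X]

/-- diameter bound -/
lemma dist_le_diam (x y : X) : dist x y ≤ Metric.diam (univ : Set X) :=
  Metric.dist_le_diam_of_mem isCompact_univ.isBounded (mem_univ _) (mem_univ _)

lemma abs_dist_le_diam (x y : X) : |dist x y| ≤ Metric.diam (univ : Set X) := by
  rw [abs_of_nonneg dist_nonneg]; exact dist_le_diam x y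

/-- the potential of a pair of measures -/
noncomputable def potPN (P N : Measure X) (x : X) : ℝ :=
  (∫ y, dist x y ∂P) - ∫ y, dist x y ∂N

lemma measurable_pot (P N : Measure X) [IsFiniteMeasure P] [IsFiniteMeasure N] :
    Measurable (potPN P N) := by
  have h : ∀ (Q : Measure X), IsFiniteMeasure Q → Measurable (fun x => ∫ y, dist x y ∂Q) := by
    intro Q hQ
    have hc : StronglyMeasurable (fun p : X × X => dist p.1 p.2) :=
      continuous_dist.stronglyMeasurable
    exact (hc.integral_prod_right').measurable
  exact (h P ‹_›).sub (h N ‹_›)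

lemma abs_pot_le (P N : Measure X) [IsFiniteMeasure P] [IsFiniteMeasure N] (x : X) :
    |potPN P N x| ≤ Metric.diam (univ : Set X) * ((P univ).toReal + (N univ).toReal) := by
  have h1 := integral_abs_le (Q := P) (f := fun y => dist x y) (fun y => abs_dist_le_diam x y)
  have h2 := integral_abs_le (Q := N) (f := fun y => dist x y) (fun y => abs_dist_le_diam x y)
  have := abs_sub (∫ y, dist x y ∂P) (∫ y, dist x y ∂N)
  unfold potPN
  have h3 : |(∫ y, dist x y ∂P) - ∫ y, dist x y ∂N| ≤ |∫ y, dist x y ∂P| + |∫ y, dist x y ∂N| :=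
    abs_sub _ _
  nlinarith [abs_nonneg (∫ y, dist x y ∂P)]

/-- energy via a representation -/
lemma en_repr (P N : Measure X) [IsFiniteMeasure P] [IsFiniteMeasure N]
    {μ : SignedMeasure X} (hμ : μ = P.toSignedMeasure - N.toSignedMeasure) :
    en (fun x y => dist x y) μ μ = (∫ x, potPN P N x ∂P) - ∫ x, potPN P N x ∂N := by
  have hinner : ∀ x : X, sInt μ (fun y => dist x y) = potPN P N x := fun x =>
    sInt_repr P N (measurable_dist.comp (measurable_const.prodMk measurable_id))
      (fun y => abs_dist_le_diam x y) hμ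
  have : en (fun x y => dist x y) μ μ = sInt μ (potPN P N) := by
    unfold en
    congr 1
    funext x
    exact hinner x
  rw [this]
  exact sInt_repr P N (measurable_pot P N) (abs_pot_le P N) hμ

end OneSpace
section TwoSpace
variable {X Y : Type*} [MetricSpace X] [CompactSpace X] [MeasurableSpace X] [BorelSpace X]
  [MetricSpace Y] [CompactSpace Y] [MeasurableSpace Y] [BorelSpace Y]

lemma abs_dJoin_le (c : ℝ) (z w : X ⊕ Y) :
    |dJoin (fun x y => dist x y) (fun x y => dist x y) c z w|
      ≤ max (max (Metric.diam (univ : Set X)) (Metric.diam (univ : Set Y))) |c| := by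
  rcases z with x | y <;> rcases w with x' | y' <;> simp only [dJoin]
  · exact le_trans (abs_dist_le_diam x x') (le_trans (le_max_left _ _) (le_max_left _ _))
  · exact le_max_right _ _
  · exact le_max_right _ _
  · exact le_trans (abs_dist_le_diam y y') (le_trans (le_max_right _ _) (le_max_left _ _))

lemma en_split (c : ℝ) (P N : Measure (X ⊕ Y)) [IsFiniteMeasure P] [IsFiniteMeasure N]
    (PX NX : Measure X) [IsFiniteMeasure PX] [IsFiniteMeasure NX]
    (PY NY : Measure Y) [IsFiniteMeasure PY] [IsFiniteMeasure NY]
    (hPX : P.comap Sum.inl = PX) (hNX : N.comap Sum.inl = NX)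
    (hPY : P.comap Sum.inr = PY) (hNY : N.comap Sum.inr = NY) :
    en (dJoin (fun x y => dist x y) (fun x y => dist x y) c)
        (P.toSignedMeasure - N.toSignedMeasure) (P.toSignedMeasure - N.toSignedMeasure)
      = en (fun x y => dist x y)
            (PX.toSignedMeasure - NX.toSignedMeasure) (PX.toSignedMeasure - NX.toSignedMeasure)
        + en (fun x y => dist x y)
            (PY.toSignedMeasure - NY.toSignedMeasure) (PY.toSignedMeasure - NY.toSignedMeasure)
        + 2 * c * ((PX univ).toReal - (NX univ).toReal)
            * ((PY univ).toReal - (NY univ).toReal) := by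
  set dJ := dJoin (fun x y : X => dist x y) (fun x y : Y => dist x y) c with hdJ
  set μ := P.toSignedMeasure - N.toSignedMeasure with hμdef
  set pX := (PX univ).toReal
  set nX := (NX univ).toReal
  set pY := (PY univ).toReal
  set nY := (NY univ).toReal
  set a := pX - nX with ha
  set b := pY - nY with hb
  set DX := Metric.diam (univ : Set X)
  set DY := Metric.diam (univ : Set Y)
  set D := max (max DX DY) |c| with hD
  set gJ : X ⊕ Y → ℝ :=
    Sum.elim (fun x => potPN PX NX x + c * b) (fun y => potPN PY NY y + c * a) with hgJ
  -- inner integral computation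
  have hinner : ∀ z, sInt μ (fun w => dJ z w) = gJ z := by
    rintro (x | y)
    · have hfeq : (fun w => dJ (Sum.inl x) w)
          = Sum.elim (fun x' : X => dist x x') (fun _ : Y => c) := by
        funext w; rcases w with x' | y' <;> rfl
      have hmeas : Measurable (fun w => dJ (Sum.inl x) w) := by
        rw [hfeq]
        exact Measurable.sumElim
          (measurable_dist.comp (measurable_const.prodMk measurable_id)) measurable_const
      have hbdd : ∀ w, |dJ (Sum.inl x) w| ≤ D := fun w => abs_dJoin_le c _ w
      rw [sInt_repr P N hmeas hbdd hμdef,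
        integral_sum_meas P hmeas hbdd, integral_sum_meas N hmeas hbdd,
        hPX, hNX, hPY, hNY]
      have e1 : ∀ (Q : Measure X), (∫ x', dJ (Sum.inl x) (Sum.inl x') ∂Q)
          = ∫ x', dist x x' ∂Q := fun Q => rfl
      have e2 : ∀ (Q : Measure Y), (∫ y', dJ (Sum.inl x) (Sum.inr y') ∂Q)
          = (Q univ).toReal * c := fun Q => by
        rw [show (fun y' => dJ (Sum.inl x) (Sum.inr y')) = fun _ : Y => c from rfl,
          integral_const, smul_eq_mul, measureReal_def]
      rw [e1, e1, e2, e2]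
      simp only [hgJ, Sum.elim_inl, potPN, hb]
      ring
    · have hfeq : (fun w => dJ (Sum.inr y) w)
          = Sum.elim (fun _ : X => c) (fun y' : Y => dist y y') := by
        funext w; rcases w with x' | y' <;> rfl
      have hmeas : Measurable (fun w => dJ (Sum.inr y) w) := by
        rw [hfeq]
        exact Measurable.sumElim measurable_const
          (measurable_dist.comp (measurable_const.prodMk measurable_id))
      have hbdd : ∀ w, |dJ (Sum.inr y) w| ≤ D := fun w => abs_dJoin_le c _ w
      rw [sInt_repr P N hmeas hbdd hμdef,
        integral_sum_meas P hmeas hbdd, integral_sum_meas N hmeas hbdd,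
        hPX, hNX, hPY, hNY]
      have e1 : ∀ (Q : Measure Y), (∫ y', dJ (Sum.inr y) (Sum.inr y') ∂Q)
          = ∫ y', dist y y' ∂Q := fun Q => rfl
      have e2 : ∀ (Q : Measure X), (∫ x', dJ (Sum.inr y) (Sum.inl x') ∂Q)
          = (Q univ).toReal * c := fun Q => by
        rw [show (fun x' => dJ (Sum.inr y) (Sum.inl x')) = fun _ : X => c from rfl,
          integral_const, smul_eq_mul, measureReal_def]
      rw [e1, e1, e2, e2]
      simp only [hgJ, Sum.elim_inr, potPN, ha]
      ring
  -- outer step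
  have hen : en dJ μ μ = sInt μ gJ := by
    unfold en
    congr 1
    funext z
    exact hinner z
  set KX := DX * (pX + nX) + |c * b| with hKX
  set KY := DY * (pY + nY) + |c * a| with hKY
  set K := max KX KY with hK
  have hgmeas : Measurable gJ := by
    refine Measurable.sumElim ?_ ?_
    · exact (measurable_pot PX NX).add measurable_const
    · exact (measurable_pot PY NY).add measurable_const
  have hgbdd : ∀ z, |gJ z| ≤ K := by
    rintro (x | y)
    · refine le_trans ?_ (le_max_left KX KY)
      simp only [hgJ, Sum.elim_inl, hKX]
      calc |potPN PX NX x + c * b| ≤ |potPN PX NX x| + |c * b| := abs_add_le _ _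
        _ ≤ DX * (pX + nX) + |c * b| := by
            have := abs_pot_le PX NX x
            linarith
    · refine le_trans ?_ (le_max_right KX KY)
      simp only [hgJ, Sum.elim_inr, hKY]
      calc |potPN PY NY y + c * a| ≤ |potPN PY NY y| + |c * a| := abs_add_le _ _
        _ ≤ DY * (pY + nY) + |c * a| := by
            have := abs_pot_le PY NY y
            linarith
  have hintX : ∀ (Q : Measure X) [IsFiniteMeasure Q],
      (∫ x, gJ (Sum.inl x) ∂Q) = (∫ x, potPN PX NX x ∂Q) + (Q univ).toReal * (c * b) := by
    intro Q hQ
    rw [show (fun x => gJ (Sum.inl x)) = fun x => potPN PX NX x + c * b from rfl,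
      integral_add (integrable_of_bdd (measurable_pot PX NX) (abs_pot_le PX NX))
        (integrable_const _), integral_const, smul_eq_mul, measureReal_def]
  have hintY : ∀ (Q : Measure Y) [IsFiniteMeasure Q],
      (∫ y, gJ (Sum.inr y) ∂Q) = (∫ y, potPN PY NY y ∂Q) + (Q univ).toReal * (c * a) := by
    intro Q hQ
    rw [show (fun y => gJ (Sum.inr y)) = fun y => potPN PY NY y + c * a from rfl,
      integral_add (integrable_of_bdd (measurable_pot PY NY) (abs_pot_le PY NY))
        (integrable_const _), integral_const, smul_eq_mul, measureReal_def]
  rw [hen, sInt_repr P N hgmeas hgbdd hμdef,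
    integral_sum_meas P hgmeas hgbdd, integral_sum_meas N hgmeas hgbdd,
    hPX, hNX, hPY, hNY, hintX PX, hintX NX, hintY PY, hintY NY,
    en_repr PX NX rfl, en_repr PY NY rfl]
  ring

end TwoSpace

section Scaling
variable {α : Type*} [MeasurableSpace α]

lemma en_smul (d : α → α → ℝ) (μ : SignedMeasure α) (r : ℝ) :
    en d (r • μ) (r • μ) = r ^ 2 * en d μ μ := by
  unfold en
  have h1 : (fun x => sInt (r • μ) (fun y => d x y))
      = fun x => r * sInt μ (fun y => d x y) := by
    funext x; exact sInt_smul μ _ r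
  rw [h1, sInt_smul, sInt_const_mul]
  ring

lemma en_neg (d : α → α → ℝ) (μ : SignedMeasure α) :
    en d (-μ) (-μ) = en d μ μ := by
  have := en_smul d μ (-1)
  have h : (-1 : ℝ) • μ = -μ := by ext s hs; simp
  simpa [h] using this

end Scaling

section EnLe
variable {X : Type*} [MetricSpace X] [MeasurableSpace X]

lemma en_le_sq (m : ℝ) (hub : m ∈ upperBounds (MSet X))
    (hq : ∀ μ : SignedMeasure X, μ univ = (0 : ℝ) → en (fun x y => dist x y) μ μ ≤ 0)
    (μ : SignedMeasure X) :
    en (fun x y => dist x y) μ μ ≤ (μ univ) ^ 2 * m := by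
  rcases eq_or_ne (μ univ) (0 : ℝ) with h0 | h0
  · rw [h0]
    simpa using hq μ h0
  · set aa := μ univ with haa
    have hmem : en (fun x y => dist x y) (aa⁻¹ • μ) (aa⁻¹ • μ) ∈ MSet X := by
      refine ⟨aa⁻¹ • μ, ?_, rfl⟩
      rw [VectorMeasure.smul_apply, smul_eq_mul, ← haa, inv_mul_cancel₀ h0]
    have hle := hub hmem
    rw [en_smul] at hle
    have haa2 : (0 : ℝ) < aa ^ 2 := (sq_nonneg aa).lt_of_ne' (pow_ne_zero 2 h0)
    calc en (fun x y => dist x y) μ μ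
        = aa ^ 2 * ((aa⁻¹) ^ 2 * en (fun x y => dist x y) μ μ) := by
          field_simp
      _ ≤ aa ^ 2 * m := mul_le_mul_of_nonneg_left hle haa2.le
end EnLe

section Construct
variable {α β : Type*} [MeasurableSpace α] [MeasurableSpace β]

lemma comap_construct_inl (Q₁ : Measure α) (Q₂ : Measure β) :
    (Q₁.map Sum.inl + Q₂.map Sum.inr).comap Sum.inl = Q₁ := by
  ext s hs
  rw [me_inl.comap_apply, Measure.add_apply, me_inl.map_apply, me_inr.map_apply,
    Set.preimage_image_eq _ Sum.inl_injective]
  simp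

lemma comap_construct_inr (Q₁ : Measure α) (Q₂ : Measure β) :
    (Q₁.map Sum.inl + Q₂.map Sum.inr).comap Sum.inr = Q₂ := by
  ext s hs
  rw [me_inr.comap_apply, Measure.add_apply, me_inl.map_apply, me_inr.map_apply,
    Set.preimage_image_eq _ Sum.inr_injective]
  simp

lemma construct_univ (Q₁ : Measure α) (Q₂ : Measure β)
    [IsFiniteMeasure Q₁] [IsFiniteMeasure Q₂] :
    (((Q₁.map Sum.inl + Q₂.map Sum.inr) : Measure (α ⊕ β)) univ).toReal
      = (Q₁ univ).toReal + (Q₂ univ).toReal := by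
  rw [Measure.add_apply, me_inl.map_apply, me_inr.map_apply, Set.preimage_univ,
    Set.preimage_univ, ENNReal.toReal_add (measure_ne_top _ _) (measure_ne_top _ _)]

lemma toReal_univ_split (Q : Measure (α ⊕ β)) [IsFiniteMeasure Q] :
    (Q univ).toReal = ((Q.comap Sum.inl) univ).toReal + ((Q.comap Sum.inr) univ).toReal := by
  rw [univ_split Q, ENNReal.toReal_add (measure_ne_top _ _) (measure_ne_top _ _)]

end Construct

end Aux6


open Aux6

/-- The join `Z = X ∪ Y` of two disjoint compact quasihypermetric spaces with finite
`M`-constants and cross-distance `c` (with `2c ≥ max(D(X), D(Y))`) is quasihypermetric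
if and only if `2c ≥ M(X) + M(Y)`. -/
theorem stmt6 {X Y : Type*} [MetricSpace X] [CompactSpace X] [MeasurableSpace X] [BorelSpace X]
    [MetricSpace Y] [CompactSpace Y] [MeasurableSpace Y] [BorelSpace Y]
    (hqX : ∀ μ : SignedMeasure X, μ Set.univ = (0 : ℝ) → en (fun x y => dist x y) μ μ ≤ 0)
    (hqY : ∀ μ : SignedMeasure Y, μ Set.univ = (0 : ℝ) → en (fun x y => dist x y) μ μ ≤ 0)
    (mX mY : ℝ) (hmX : IsLUB (MSet X) mX) (hmY : IsLUB (MSet Y) mY)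
    (c : ℝ)
    (hc : max (Metric.diam (Set.univ : Set X)) (Metric.diam (Set.univ : Set Y)) ≤ 2 * c) :
    (∀ μ : SignedMeasure (X ⊕ Y), μ Set.univ = (0 : ℝ) →
        en (dJoin (fun x y => dist x y) (fun x y => dist x y) c) μ μ ≤ 0) ↔
      mX + mY ≤ 2 * c := by
  constructor
  · intro h
    have hub : ∀ r ∈ MSet X, ∀ s ∈ MSet Y, r + s ≤ 2 * c := by
      rintro r ⟨μ₁, hμ₁m, hμ₁e⟩ s ⟨μ₂, hμ₂m, hμ₂e⟩
      obtain ⟨P₁, N₁, iP₁, iN₁, hrep₁⟩ :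
          ∃ (P N : Measure X), ∃ (_ : IsFiniteMeasure P) (_ : IsFiniteMeasure N),
            μ₁ = P.toSignedMeasure - N.toSignedMeasure :=
        ⟨_, _, inferInstance, inferInstance, jordan_spec μ₁⟩
      obtain ⟨P₂, N₂, iP₂, iN₂, hrep₂⟩ :
          ∃ (P N : Measure Y), ∃ (_ : IsFiniteMeasure P) (_ : IsFiniteMeasure N),
            μ₂ = P.toSignedMeasure - N.toSignedMeasure :=
        ⟨_, _, inferInstance, inferInstance, jordan_spec μ₂⟩
      have hm₁ : (1 : ℝ) = (P₁ Set.univ).toReal - (N₁ Set.univ).toReal := by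
        rw [← hμ₁m]; exact mass_repr P₁ N₁ hrep₁
      have hm₂ : (1 : ℝ) = (P₂ Set.univ).toReal - (N₂ Set.univ).toReal := by
        rw [← hμ₂m]; exact mass_repr P₂ N₂ hrep₂
      have hmZ : ((P₁.map Sum.inl + N₂.map Sum.inr).toSignedMeasure
          - (N₁.map Sum.inl + P₂.map Sum.inr).toSignedMeasure) Set.univ = (0 : ℝ) := by
        rw [mass_repr _ _ rfl, construct_univ, construct_univ]
        linarith
      have hen := h _ hmZ
      rw [en_split c _ _ P₁ N₁ N₂ P₂ (comap_construct_inl _ _) (comap_construct_inl _ _)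
        (comap_construct_inr _ _) (comap_construct_inr _ _)] at hen
      rw [← hrep₁, hμ₁e] at hen
      have hneg : N₂.toSignedMeasure - P₂.toSignedMeasure = -μ₂ := by
        rw [hrep₂]; exact (neg_sub _ _).symm
      rw [hneg, en_neg, hμ₂e] at hen
      have f1 : (P₁ Set.univ).toReal - (N₁ Set.univ).toReal = 1 := hm₁.symm
      have f2 : (N₂ Set.univ).toReal - (P₂ Set.univ).toReal = -1 := by linarith
      rw [f1, f2] at hen
      linarith
    have h1 : mX ≤ 2 * c - mY := by
      refine hmX.2 fun r hr => ?_
      have h2 : mY ≤ 2 * c - r := hmY.2 fun s hs => by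
        have := hub r hr s hs; linarith
      linarith
    linarith
  · intro hsum μ hmass
    set P := μ.toJordanDecomposition.posPart with hPdef
    set N := μ.toJordanDecomposition.negPart with hNdef
    have hrep : μ = P.toSignedMeasure - N.toSignedMeasure := jordan_spec μ
    set PX := P.comap Sum.inl
    set NX := N.comap Sum.inl
    set PY := P.comap Sum.inr
    set NY := N.comap Sum.inr
    rw [hrep, en_split c P N PX NX PY NY rfl rfl rfl rfl]
    set a := (PX Set.univ).toReal - (NX Set.univ).toReal with ha
    set b := (PY Set.univ).toReal - (NY Set.univ).toReal with hb
    have hab : a + b = 0 := by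
      have h0 : μ Set.univ = (P Set.univ).toReal - (N Set.univ).toReal := mass_repr P N hrep
      rw [hmass] at h0
      rw [ha, hb]
      have h1 := toReal_univ_split P
      have h2 := toReal_univ_split N
      linarith
    have hEX : en (fun x y => dist x y)
        (PX.toSignedMeasure - NX.toSignedMeasure) (PX.toSignedMeasure - NX.toSignedMeasure)
        ≤ a ^ 2 * mX := by
      have := en_le_sq mX hmX.1 hqX (PX.toSignedMeasure - NX.toSignedMeasure)
      rwa [massRepr PX NX MeasurableSet.univ, ← ha] at this
    have hEY : en (fun x y => dist x y)
        (PY.toSignedMeasure - NY.toSignedMeasure) (PY.toSignedMeasure - NY.toSignedMeasure)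
        ≤ b ^ 2 * mY := by
      have := en_le_sq mY hmY.1 hqY (PY.toSignedMeasure - NY.toSignedMeasure)
      rwa [massRepr PY NY MeasurableSet.univ, ← hb] at this
    have hba : b = -a := by linarith
    rw [hba] at hEY ⊢
    nlinarith [sq_nonneg a, hEX, hEY, hsum]
end

section
/- In the setting of the two-space join Z = X ∪ Y with cross-distance c (2c ≥ max(D(X), D(Y))), if μ₁ ∈ M₁(X) and μ₂ ∈ M₁(Y) are d-invariant measures, then μ = (M(Y) − c)μ₁ + (M(X) − c)μ₂ is a d-invariant measure on Z with value M(X)M(Y) − c². -/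
open MeasureTheory

lemma aux_smul_toSigned {Z : Type*} [MeasurableSpace Z] (a : ℝ) (p : Measure Z)
    [IsFiniteMeasure p] :
    a • p.toSignedMeasure
      = (a.toNNReal • p).toSignedMeasure - ((-a).toNNReal • p).toSignedMeasure := by
  ext s hs
  rw [VectorMeasure.smul_apply, VectorMeasure.sub_apply,
    Measure.toSignedMeasure_apply_measurable hs,
    Measure.toSignedMeasure_apply_measurable hs,
    Measure.toSignedMeasure_apply_measurable hs]
  simp only [measureReal_def, Measure.smul_apply, ENNReal.smul_def, smul_eq_mul, ENNReal.toReal_mul,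
    ENNReal.coe_toReal, Real.coe_toNNReal']
  rcases le_total 0 a with h | h
  · rw [max_eq_left h, max_eq_right (by linarith)]; ring
  · rw [max_eq_right h, max_eq_left (by linarith)]; ring

lemma aux_sInt_eq {Z : Type*} [MeasurableSpace Z] (μ : SignedMeasure Z) (p n : Measure Z)
    [IsFiniteMeasure p] [IsFiniteMeasure n]
    (h : μ = p.toSignedMeasure - n.toSignedMeasure) (f : Z → ℝ)
    (hf : ∀ (m : Measure Z), IsFiniteMeasure m → Integrable f m) :
    sInt μ f = (∫ x, f x ∂p) - ∫ x, f x ∂n := by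
  set P := μ.toJordanDecomposition.posPart with hP
  set N := μ.toJordanDecomposition.negPart with hN
  have hμeq : μ = P.toSignedMeasure - N.toSignedMeasure :=
    (μ.toSignedMeasure_toJordanDecomposition).symm
  have hJ : P.toSignedMeasure - N.toSignedMeasure = p.toSignedMeasure - n.toSignedMeasure :=
    hμeq.symm.trans h
  have hkey : P + n = N + p := by
    rw [← Measure.toSignedMeasure_eq_toSignedMeasure_iff,
      Measure.toSignedMeasure_add, Measure.toSignedMeasure_add]
    have := sub_eq_sub_iff_add_eq_add.mp hJ
    linear_combination (norm := skip) this
    abel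
  have h1 : (∫ x, f x ∂(P + n)) = (∫ x, f x ∂(N + p)) := by rw [hkey]
  rw [integral_add_measure (hf P inferInstance) (hf n inferInstance),
    integral_add_measure (hf N inferInstance) (hf p inferInstance)] at h1
  simp only [sInt, ← hP, ← hN]
  linarith

lemma aux_sInt_combo {Z : Type*} [MeasurableSpace Z] (a b : ℝ) (p₁ n₁ p₂ n₂ : Measure Z)
    [IsFiniteMeasure p₁] [IsFiniteMeasure n₁] [IsFiniteMeasure p₂] [IsFiniteMeasure n₂]
    (f : Z → ℝ) (hf : ∀ (m : Measure Z), IsFiniteMeasure m → Integrable f m) :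
    sInt (a • (p₁.toSignedMeasure - n₁.toSignedMeasure)
        + b • (p₂.toSignedMeasure - n₂.toSignedMeasure)) f
      = a * ((∫ x, f x ∂p₁) - ∫ x, f x ∂n₁) + b * ((∫ x, f x ∂p₂) - ∫ x, f x ∂n₂) := by
  set A := a.toNNReal
  set A' := (-a).toNNReal
  set B := b.toNNReal
  set B' := (-b).toNNReal
  have hrw : a • (p₁.toSignedMeasure - n₁.toSignedMeasure)
        + b • (p₂.toSignedMeasure - n₂.toSignedMeasure)
      = (A • p₁ + A' • n₁ + B • p₂ + B' • n₂).toSignedMeasure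
        - (A' • p₁ + A • n₁ + B' • p₂ + B • n₂).toSignedMeasure := by
    rw [smul_sub, smul_sub, aux_smul_toSigned a p₁, aux_smul_toSigned a n₁,
      aux_smul_toSigned b p₂, aux_smul_toSigned b n₂,
      Measure.toSignedMeasure_add, Measure.toSignedMeasure_add, Measure.toSignedMeasure_add,
      Measure.toSignedMeasure_add, Measure.toSignedMeasure_add, Measure.toSignedMeasure_add]
    abel
  rw [aux_sInt_eq _ _ _ hrw f hf]
  rw [integral_add_measure (by exact hf _ inferInstance) (hf _ inferInstance),
    integral_add_measure (by exact hf _ inferInstance) (hf _ inferInstance),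
    integral_add_measure (by exact hf _ inferInstance) (hf _ inferInstance),
    integral_add_measure (by exact hf _ inferInstance) (hf _ inferInstance),
    integral_add_measure (by exact hf _ inferInstance) (hf _ inferInstance),
    integral_add_measure (by exact hf _ inferInstance) (hf _ inferInstance)]
  have e : ∀ (r : NNReal) (m : Measure Z), (∫ x, f x ∂(r • m)) = (r : ℝ) * ∫ x, f x ∂m := by
    intro r m
    rw [show (r • m) = ((r : ENNReal) • m) from rfl, integral_smul_measure]
    simp
  rw [e A p₁, e A' n₁, e B p₂, e B' n₂, e A' p₁, e A n₁, e B' p₂, e B n₂]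
  have hA : (A : ℝ) - (A' : ℝ) = a := by
    simp only [A, A', Real.coe_toNNReal']
    rcases le_total 0 a with h | h
    · rw [max_eq_left h, max_eq_right (by linarith)]; ring
    · rw [max_eq_right h, max_eq_left (by linarith)]; ring
  have hB : (B : ℝ) - (B' : ℝ) = b := by
    simp only [B, B', Real.coe_toNNReal']
    rcases le_total 0 b with h | h
    · rw [max_eq_left h, max_eq_right (by linarith)]; ring
    · rw [max_eq_right h, max_eq_left (by linarith)]; ring
  linear_combination ((∫ x, f x ∂p₁) - ∫ x, f x ∂n₁) * hA
    + ((∫ x, f x ∂p₂) - ∫ x, f x ∂n₂) * hB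

lemma aux_map_jordan {W Z : Type*} [MeasurableSpace W] [MeasurableSpace Z]
    (μ : SignedMeasure W) {f : W → Z} (hf : Measurable f) :
    μ.map f = (μ.toJordanDecomposition.posPart.map f).toSignedMeasure
      - (μ.toJordanDecomposition.negPart.map f).toSignedMeasure := by
  set P := μ.toJordanDecomposition.posPart
  set N := μ.toJordanDecomposition.negPart
  have hμeq : μ = P.toSignedMeasure - N.toSignedMeasure :=
    (μ.toSignedMeasure_toJordanDecomposition).symm
  ext s hs
  have h1 : μ (f ⁻¹' s) = (P (f ⁻¹' s)).toReal - (N (f ⁻¹' s)).toReal := by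
    conv_lhs => rw [hμeq]
    rw [VectorMeasure.sub_apply, Measure.toSignedMeasure_apply_measurable (hf hs),
      Measure.toSignedMeasure_apply_measurable (hf hs)]
    rfl
  rw [VectorMeasure.map_apply (v := μ) hf hs, VectorMeasure.sub_apply,
    Measure.toSignedMeasure_apply_measurable hs, Measure.toSignedMeasure_apply_measurable hs,
    measureReal_def, measureReal_def, Measure.map_apply hf hs, Measure.map_apply hf hs, h1]

lemma aux_int {X Y : Type*} [MetricSpace X] [CompactSpace X] [MeasurableSpace X] [BorelSpace X]
    [MetricSpace Y] [MeasurableSpace Y]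
    (x : X) (c : ℝ) (m : Measure (X ⊕ Y)) [IsFiniteMeasure m] :
    Integrable (Sum.elim (fun x' => dist x x') (fun _ : Y => c)) m := by
  have hmeas : Measurable (Sum.elim (fun x' => dist x x') (fun _ : Y => c)) :=
    Measurable.sumElim (by fun_prop) measurable_const
  refine ⟨hmeas.aestronglyMeasurable, ?_⟩
  apply MeasureTheory.HasFiniteIntegral.of_bounded
    (C := max (Metric.diam (Set.univ : Set X)) |c|)
  filter_upwards with w
  cases w with
  | inl x' =>
      simp only [Sum.elim_inl, Real.norm_eq_abs, abs_of_nonneg dist_nonneg]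
      exact le_max_of_le_left
        (Metric.dist_le_diam_of_mem isCompact_univ.isBounded trivial trivial)
  | inr y => simpa using le_max_right _ _

lemma aux_int' {X Y : Type*} [MetricSpace X] [MeasurableSpace X]
    [MetricSpace Y] [CompactSpace Y] [MeasurableSpace Y] [BorelSpace Y]
    (y : Y) (c : ℝ) (m : Measure (X ⊕ Y)) [IsFiniteMeasure m] :
    Integrable (Sum.elim (fun _ : X => c) (fun y' => dist y y')) m := by
  have hmeas : Measurable (Sum.elim (fun _ : X => c) (fun y' => dist y y')) :=
    Measurable.sumElim measurable_const (by fun_prop)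
  refine ⟨hmeas.aestronglyMeasurable, ?_⟩
  apply MeasureTheory.HasFiniteIntegral.of_bounded
    (C := max (Metric.diam (Set.univ : Set Y)) |c|)
  filter_upwards with w
  cases w with
  | inl x => simpa using le_max_right _ _
  | inr y' =>
      simp only [Sum.elim_inr, Real.norm_eq_abs, abs_of_nonneg dist_nonneg]
      exact le_max_of_le_left
        (Metric.dist_le_diam_of_mem isCompact_univ.isBounded trivial trivial)

lemma aux_mass {W : Type*} [MeasurableSpace W] (μ : SignedMeasure W) :
    μ Set.univ = (μ.toJordanDecomposition.posPart Set.univ).toReal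
      - (μ.toJordanDecomposition.negPart Set.univ).toReal := by
  conv_lhs => rw [← μ.toSignedMeasure_toJordanDecomposition]
  rw [show μ.toJordanDecomposition.toSignedMeasure
      = μ.toJordanDecomposition.posPart.toSignedMeasure
        - μ.toJordanDecomposition.negPart.toSignedMeasure from rfl,
    VectorMeasure.sub_apply, Measure.toSignedMeasure_apply_measurable MeasurableSet.univ,
    Measure.toSignedMeasure_apply_measurable MeasurableSet.univ]
  rfl

/-- If `μ₁ ∈ M₁(X)` and `μ₂ ∈ M₁(Y)` are `d`-invariant measures (necessarily of values
`M(X)` and `M(Y)` respectively), then `μ = (M(Y) - c)μ₁ + (M(X) - c)μ₂` is a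
`d`-invariant measure on the join `Z = X ∪ Y` with value `M(X)M(Y) - c²`. -/
theorem stmt8 {X Y : Type*} [MetricSpace X] [CompactSpace X] [MeasurableSpace X] [BorelSpace X]
    [MetricSpace Y] [CompactSpace Y] [MeasurableSpace Y] [BorelSpace Y]
    (hqX : ∀ μ : SignedMeasure X, μ Set.univ = (0 : ℝ) → en (fun x y => dist x y) μ μ ≤ 0)
    (hqY : ∀ μ : SignedMeasure Y, μ Set.univ = (0 : ℝ) → en (fun x y => dist x y) μ μ ≤ 0)
    (mX mY : ℝ) (hmX : IsLUB (MSet X) mX) (hmY : IsLUB (MSet Y) mY)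
    (c : ℝ)
    (hc : max (Metric.diam (Set.univ : Set X)) (Metric.diam (Set.univ : Set Y)) ≤ 2 * c)
    (μ₁ : SignedMeasure X) (hμ₁ : μ₁ Set.univ = (1 : ℝ))
    (μ₂ : SignedMeasure Y) (hμ₂ : μ₂ Set.univ = (1 : ℝ))
    (hinv₁ : ∀ x : X, dPot (fun x y => dist x y) μ₁ x = mX)
    (hinv₂ : ∀ y : Y, dPot (fun x y => dist x y) μ₂ y = mY) :
    ∀ z : X ⊕ Y,
      dPot (dJoin (fun x y => dist x y) (fun x y => dist x y) c)
        ((mY - c) • μ₁.map Sum.inl + (mX - c) • μ₂.map Sum.inr) z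
        = mX * mY - c ^ 2 := by
  intro z
  simp only [dPot]
  rw [aux_map_jordan μ₁ measurable_inl, aux_map_jordan μ₂ measurable_inr]
  set P₁ := μ₁.toJordanDecomposition.posPart
  set N₁ := μ₁.toJordanDecomposition.negPart
  set P₂ := μ₂.toJordanDecomposition.posPart
  set N₂ := μ₂.toJordanDecomposition.negPart
  have hmass₁ : (P₁ Set.univ).toReal - (N₁ Set.univ).toReal = 1 := by
    have := aux_mass μ₁; rw [hμ₁] at this; linarith
  have hmass₂ : (P₂ Set.univ).toReal - (N₂ Set.univ).toReal = 1 := by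
    have := aux_mass μ₂; rw [hμ₂] at this; linarith
  cases z with
  | inl x =>
    have hfe : (fun w => dJoin (fun x y => dist x y) (fun x y => dist x y) c (Sum.inl x) w)
        = Sum.elim (fun x' => dist x x') (fun _ : Y => c) := by
      funext w; cases w <;> rfl
    rw [hfe, aux_sInt_combo _ _ _ _ _ _ _
      (fun m hm => by have := hm; exact aux_int x c m)]
    have e1 : ∀ (m : Measure X) [IsFiniteMeasure m],
        (∫ w, Sum.elim (fun x' => dist x x') (fun _ : Y => c) w ∂(m.map Sum.inl))
          = ∫ x', dist x x' ∂m := by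
      intro m hm
      rw [integral_map measurable_inl.aemeasurable (aux_int x c (m.map Sum.inl)).1]
      simp
    have e2 : ∀ (m : Measure Y) [IsFiniteMeasure m],
        (∫ w, Sum.elim (fun x' => dist x x') (fun _ : Y => c) w ∂(m.map Sum.inr))
          = (m Set.univ).toReal * c := by
      intro m hm
      rw [integral_map measurable_inr.aemeasurable (aux_int x c (m.map Sum.inr)).1]
      simp [smul_eq_mul, measureReal_def]
    rw [e1 P₁, e1 N₁, e2 P₂, e2 N₂]
    have h1 : (∫ x', dist x x' ∂P₁) - ∫ x', dist x x' ∂N₁ = mX := hinv₁ x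
    linear_combination (mY - c) * h1 + (mX - c) * c * hmass₂
  | inr y =>
    have hfe : (fun w => dJoin (fun x y => dist x y) (fun x y => dist x y) c (Sum.inr y) w)
        = Sum.elim (fun _ : X => c) (fun y' => dist y y') := by
      funext w; cases w <;> rfl
    rw [hfe, aux_sInt_combo _ _ _ _ _ _ _
      (fun m hm => by have := hm; exact aux_int' y c m)]
    have e1 : ∀ (m : Measure X) [IsFiniteMeasure m],
        (∫ w, Sum.elim (fun _ : X => c) (fun y' => dist y y') w ∂(m.map Sum.inl))
          = (m Set.univ).toReal * c := by
      intro m hm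
      rw [integral_map measurable_inl.aemeasurable (aux_int' y c (m.map Sum.inl)).1]
      simp [smul_eq_mul, measureReal_def]
    have e2 : ∀ (m : Measure Y) [IsFiniteMeasure m],
        (∫ w, Sum.elim (fun _ : X => c) (fun y' => dist y y') w ∂(m.map Sum.inr))
          = ∫ y', dist y y' ∂m := by
      intro m hm
      rw [integral_map measurable_inr.aemeasurable (aux_int' y c (m.map Sum.inr)).1]
      simp
    rw [e1 P₁, e1 N₁, e2 P₂, e2 N₂]
    have h2 : (∫ y', dist y y' ∂P₂) - ∫ y', dist y y' ∂N₂ = mY := hinv₂ y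
    linear_combination (mX - c) * h2 + (mY - c) * c * hmass₁
end

section
/- Let (X, d) be a compact quasihypermetric space with M(X) < ∞, equipped with the semi-inner product (μ | ν) = (M(X)+1)μ(X)ν(X) − I(μ,ν) on signed measures. A sequence μ_n in M₁(X) satisfies I(μ_n) → M(X) (is maximal) if and only if ‖μ_n − μ_m‖ → 0 as n, m → ∞ and (μ_n | ν) → 0 for every signed measure ν of mass 0. -/
open MeasureTheory

namespace Stmt10Aux
set_option linter.unusedSectionVars false
variable {X : Type*} [MetricSpace X] [CompactSpace X] [MeasurableSpace X] [BorelSpace X]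

lemma integrable_cont (ρ : Measure X) [IsFiniteMeasure ρ] {f : X → ℝ} (hf : Continuous f) :
    Integrable f ρ :=
  hf.integrable_of_hasCompactSupport (HasCompactSupport.of_compactSpace f)

lemma apply_eq (μ : SignedMeasure X) {s : Set X} (hs : MeasurableSet s) :
    μ s = (μ.toJordanDecomposition.posPart s).toReal -
      (μ.toJordanDecomposition.negPart s).toReal := by
  conv_lhs => rw [← μ.toSignedMeasure_toJordanDecomposition]
  rw [JordanDecomposition.toSignedMeasure, Measure.toSignedMeasure_sub_apply hs]
  rfl

lemma posPart_add_aux (μ ν : SignedMeasure X) :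
    (μ + ν).toJordanDecomposition.posPart +
      (μ.toJordanDecomposition.negPart + ν.toJordanDecomposition.negPart)
    = (μ + ν).toJordanDecomposition.negPart +
      (μ.toJordanDecomposition.posPart + ν.toJordanDecomposition.posPart) := by
  ext s hs
  have h1 := apply_eq (μ + ν) hs
  have h2 := apply_eq μ hs
  have h3 := apply_eq ν hs
  rw [VectorMeasure.add_apply] at h1
  simp only [Measure.add_apply]
  rw [← ENNReal.toReal_eq_toReal_iff' (by finiteness) (by finiteness)]
  rw [ENNReal.toReal_add (by finiteness) (by finiteness),
    ENNReal.toReal_add (by finiteness) (by finiteness),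
    ENNReal.toReal_add (by finiteness) (by finiteness),
    ENNReal.toReal_add (by finiteness) (by finiteness)]
  linarith

lemma sInt_add (μ ν : SignedMeasure X) {f : X → ℝ} (hf : Continuous f) :
    sInt (μ + ν) f = sInt μ f + sInt ν f := by
  have key := congrArg (fun ρ : Measure X => ∫ x, f x ∂ρ) (posPart_add_aux μ ν)
  simp only [integral_add_measure (integrable_cont _ hf) (integrable_cont _ hf)] at key
  simp only [sInt]
  linarith

lemma sInt_neg (μ : SignedMeasure X) (f : X → ℝ) : sInt (-μ) f = -sInt μ f := by
  simp [sInt, SignedMeasure.toJordanDecomposition_neg, JordanDecomposition.neg_posPart,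
    JordanDecomposition.neg_negPart]

lemma sInt_smul_nonneg {r : ℝ} (hr : 0 ≤ r) (μ : SignedMeasure X) (f : X → ℝ) :
    sInt (r • μ) f = r * sInt μ f := by
  rw [sInt, sInt, SignedMeasure.toJordanDecomposition_smul_real,
    JordanDecomposition.real_smul_posPart_nonneg _ _ hr,
    JordanDecomposition.real_smul_negPart_nonneg _ _ hr,
    integral_smul_nnreal_measure, integral_smul_nnreal_measure]
  simp [NNReal.smul_def, Real.coe_toNNReal r hr, mul_sub]

lemma sInt_smul (r : ℝ) (μ : SignedMeasure X) (f : X → ℝ) : sInt (r • μ) f = r * sInt μ f := by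
  rcases le_or_gt 0 r with hr | hr
  · exact sInt_smul_nonneg hr μ f
  · have h : r • μ = -((-r) • μ) := by ext s hs; simp [VectorMeasure.smul_apply, VectorMeasure.neg_apply]
    rw [h, sInt_neg, sInt_smul_nonneg (by linarith : (0:ℝ) ≤ -r)]
    ring

lemma pot_cont (ρ : Measure X) [IsFiniteMeasure ρ] :
    Continuous (fun x => ∫ y, dist x y ∂ρ) := by
  apply continuous_of_dominated (bound := fun _ => Metric.diam (Set.univ : Set X))
  · exact fun x => ((continuous_const.dist continuous_id).aestronglyMeasurable)
  · exact fun x => Filter.Eventually.of_forall (fun y => by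
      rw [Real.norm_eq_abs, abs_of_nonneg dist_nonneg]
      exact Metric.dist_le_diam_of_mem Metric.isBounded_of_compactSpace (Set.mem_univ _)
        (Set.mem_univ _))
  · exact integrable_const _
  · exact Filter.Eventually.of_forall (fun y => continuous_id.dist continuous_const)

lemma dPot_cont (ν : SignedMeasure X) :
    Continuous (fun x => sInt ν (fun y => dist x y)) :=
  (pot_cont _).sub (pot_cont _)

lemma swap_aux (ρ σ : Measure X) [IsFiniteMeasure ρ] [IsFiniteMeasure σ] :
    ∫ x, ∫ y, dist x y ∂σ ∂ρ = ∫ x, ∫ y, dist x y ∂ρ ∂σ := by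
  rw [integral_integral_swap]
  · simp_rw [dist_comm]
  · exact integrable_cont _ (continuous_dist.comp (continuous_fst.prodMk continuous_snd))

lemma expand_aux (ρ₁ ρ₂ σ₁ σ₂ : Measure X) [IsFiniteMeasure ρ₁] [IsFiniteMeasure ρ₂]
    [IsFiniteMeasure σ₁] [IsFiniteMeasure σ₂] :
    (∫ x, ((∫ y, dist x y ∂σ₁) - ∫ y, dist x y ∂σ₂) ∂ρ₁) -
      ∫ x, ((∫ y, dist x y ∂σ₁) - ∫ y, dist x y ∂σ₂) ∂ρ₂ =
    ((∫ x, ∫ y, dist x y ∂σ₁ ∂ρ₁) - ∫ x, ∫ y, dist x y ∂σ₂ ∂ρ₁) -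
      ((∫ x, ∫ y, dist x y ∂σ₁ ∂ρ₂) - ∫ x, ∫ y, dist x y ∂σ₂ ∂ρ₂) := by
  rw [integral_sub (integrable_cont _ (pot_cont _)) (integrable_cont _ (pot_cont _)),
    integral_sub (integrable_cont _ (pot_cont _)) (integrable_cont _ (pot_cont _))]

/-- abbreviation for the distance kernel -/
local notation "D" => (fun x y => dist x y : X → X → ℝ)

lemma en_symm (μ ν : SignedMeasure X) : en D μ ν = en D ν μ := by
  show sInt μ (fun x => sInt ν (fun y => dist x y)) = sInt ν (fun x => sInt μ (fun y => dist x y))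
  simp only [sInt]
  rw [expand_aux, expand_aux]
  have h1 := swap_aux μ.toJordanDecomposition.posPart ν.toJordanDecomposition.posPart
  have h2 := swap_aux μ.toJordanDecomposition.posPart ν.toJordanDecomposition.negPart
  have h3 := swap_aux μ.toJordanDecomposition.negPart ν.toJordanDecomposition.posPart
  have h4 := swap_aux μ.toJordanDecomposition.negPart ν.toJordanDecomposition.negPart
  linarith

lemma en_add_left (μ ν σ : SignedMeasure X) : en D (μ + ν) σ = en D μ σ + en D ν σ :=
  sInt_add μ ν (dPot_cont σ)

lemma en_neg_left (μ σ : SignedMeasure X) : en D (-μ) σ = -en D μ σ :=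
  sInt_neg μ _

lemma en_smul_left (r : ℝ) (μ σ : SignedMeasure X) : en D (r • μ) σ = r * en D μ σ :=
  sInt_smul r μ _

lemma en_add_right (μ ν σ : SignedMeasure X) : en D σ (μ + ν) = en D σ μ + en D σ ν := by
  rw [en_symm, en_add_left, en_symm μ, en_symm ν]

lemma en_neg_right (μ σ : SignedMeasure X) : en D σ (-μ) = -en D σ μ := by
  rw [en_symm, en_neg_left, en_symm]

lemma en_smul_right (r : ℝ) (μ σ : SignedMeasure X) : en D σ (r • μ) = r * en D σ μ := by
  rw [en_symm, en_smul_left, en_symm]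

lemma en_sub_left (μ ν σ : SignedMeasure X) : en D (μ - ν) σ = en D μ σ - en D ν σ := by
  rw [sub_eq_add_neg, en_add_left, en_neg_left, sub_eq_add_neg]

lemma en_sub_right (μ ν σ : SignedMeasure X) : en D σ (μ - ν) = en D σ μ - en D σ ν := by
  rw [en_symm, en_sub_left, en_symm μ, en_symm ν]

/-- The bilinear form. -/
noncomputable def Bf (m : ℝ) (μ ν : SignedMeasure X) : ℝ :=
  (m + 1) * (μ Set.univ) * (ν Set.univ) - en D μ ν

lemma Bf_symm (m : ℝ) (μ ν : SignedMeasure X) : Bf m μ ν = Bf m ν μ := by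
  rw [Bf, Bf, en_symm]; ring

lemma Bf_add_left (m : ℝ) (μ ν σ : SignedMeasure X) :
    Bf m (μ + ν) σ = Bf m μ σ + Bf m ν σ := by
  simp only [Bf, en_add_left, VectorMeasure.add_apply]; ring

lemma Bf_sub_left (m : ℝ) (μ ν σ : SignedMeasure X) :
    Bf m (μ - ν) σ = Bf m μ σ - Bf m ν σ := by
  simp only [Bf, en_sub_left, VectorMeasure.sub_apply]; ring

lemma Bf_smul_left (m r : ℝ) (μ σ : SignedMeasure X) :
    Bf m (r • μ) σ = r * Bf m μ σ := by
  simp only [Bf, en_smul_left, VectorMeasure.smul_apply, smul_eq_mul]; ring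

lemma Bf_add_right (m : ℝ) (μ ν σ : SignedMeasure X) :
    Bf m σ (μ + ν) = Bf m σ μ + Bf m σ ν := by
  rw [Bf_symm, Bf_add_left, Bf_symm m μ, Bf_symm m ν]

lemma Bf_sub_right (m : ℝ) (μ ν σ : SignedMeasure X) :
    Bf m σ (μ - ν) = Bf m σ μ - Bf m σ ν := by
  rw [Bf_symm, Bf_sub_left, Bf_symm m μ, Bf_symm m ν]

lemma Bf_smul_right (m r : ℝ) (μ σ : SignedMeasure X) :
    Bf m σ (r • μ) = r * Bf m σ μ := by
  rw [Bf_symm, Bf_smul_left, Bf_symm]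


section Form
variable (m : ℝ)
variable (hq : ∀ ν : SignedMeasure X, ν Set.univ = (0 : ℝ) → en (fun x y => dist x y) ν ν ≤ 0)
variable (hub : ∀ r ∈ MSet X, r ≤ m)

include hub in
lemma en_le_of_mass_one {μ : SignedMeasure X} (h1 : μ Set.univ = 1) : en D μ μ ≤ m :=
  hub _ ⟨μ, h1, rfl⟩

include hq hub in
lemma Bf_nonneg (μ : SignedMeasure X) : 0 ≤ Bf m μ μ := by
  rcases eq_or_ne (μ Set.univ) 0 with h0 | h0
  · have h := hq μ h0
    simp only [Bf, h0]
    nlinarith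
  · set a := μ Set.univ with ha
    have hσ : ((a⁻¹ : ℝ) • μ) Set.univ = 1 := by
      rw [VectorMeasure.smul_apply, smul_eq_mul, ← ha, inv_mul_cancel₀ h0]
    have h1 : en D (a⁻¹ • μ) (a⁻¹ • μ) ≤ m := en_le_of_mass_one m hub hσ
    rw [en_smul_left, en_smul_right] at h1
    have haa : 0 < a * a := mul_self_pos.mpr h0
    have hfe : (a * a) * (a⁻¹ * (a⁻¹ * en D μ μ)) = en D μ μ := by
      field_simp
    have key : en D μ μ ≤ m * (a * a) := by
      nlinarith [mul_le_mul_of_nonneg_left h1 haa.le]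
    simp only [Bf, ← ha]
    nlinarith

lemma Bf_expand (μ ν : SignedMeasure X) (t : ℝ) :
    Bf m (μ + t • ν) (μ + t • ν) = Bf m μ μ + 2 * t * Bf m μ ν + t ^ 2 * Bf m ν ν := by
  rw [Bf_add_left, Bf_add_right, Bf_add_right, Bf_smul_left, Bf_smul_right, Bf_smul_left,
    Bf_smul_right, Bf_symm m ν μ]
  ring

include hq hub in
lemma Bf_cs (μ ν : SignedMeasure X) : (Bf m μ ν) ^ 2 ≤ Bf m μ μ * Bf m ν ν := by
  have h : ∀ t : ℝ, 0 ≤ Bf m ν ν * (t * t) + (2 * Bf m μ ν) * t + Bf m μ μ := by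
    intro t
    have h0 := Bf_nonneg m hq hub (μ + t • ν)
    rw [Bf_expand] at h0
    nlinarith
  have hd := discrim_le_zero h
  rw [discrim] at hd
  nlinarith

include hq hub in
lemma Bf_abs_le (μ ν : SignedMeasure X) :
    |Bf m μ ν| ≤ Real.sqrt (Bf m μ μ) * Real.sqrt (Bf m ν ν) := by
  rw [← Real.sqrt_sq_eq_abs, ← Real.sqrt_mul (Bf_nonneg m hq hub μ)]
  exact Real.sqrt_le_sqrt (Bf_cs m hq hub μ ν)

include hq hub in
lemma nrm_triangle (μ ν : SignedMeasure X) :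
    Real.sqrt (Bf m (μ + ν) (μ + ν)) ≤ Real.sqrt (Bf m μ μ) + Real.sqrt (Bf m ν ν) := by
  set sμ := Real.sqrt (Bf m μ μ) with hsμ
  set sν := Real.sqrt (Bf m ν ν) with hsν
  have hμμ : Bf m μ μ = sμ ^ 2 := (Real.sq_sqrt (Bf_nonneg m hq hub μ)).symm
  have hνν : Bf m ν ν = sν ^ 2 := (Real.sq_sqrt (Bf_nonneg m hq hub ν)).symm
  have hcross : Bf m μ ν ≤ sμ * sν :=
    le_trans (le_abs_self _) (Bf_abs_le m hq hub μ ν)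
  have hexp : Bf m (μ + ν) (μ + ν) = Bf m μ μ + 2 * Bf m μ ν + Bf m ν ν := by
    have := Bf_expand m μ ν 1
    simpa using this
  have h1 : Bf m (μ + ν) (μ + ν) ≤ (sμ + sν) ^ 2 := by
    rw [hexp, hμμ, hνν]; nlinarith
  calc Real.sqrt (Bf m (μ + ν) (μ + ν)) ≤ Real.sqrt ((sμ + sν) ^ 2) := Real.sqrt_le_sqrt h1
    _ = sμ + sν := Real.sqrt_sq (by positivity)

include hq hub in
lemma nrm_rev (μ ν : SignedMeasure X) :
    |Real.sqrt (Bf m μ μ) - Real.sqrt (Bf m ν ν)| ≤ Real.sqrt (Bf m (μ - ν) (μ - ν)) := by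
  rw [abs_sub_le_iff]
  constructor
  · have h := nrm_triangle m hq hub (μ - ν) ν
    rw [sub_add_cancel] at h
    linarith
  · have h := nrm_triangle m hq hub (ν - μ) μ
    rw [sub_add_cancel] at h
    have hswap : Bf m (ν - μ) (ν - μ) = Bf m (μ - ν) (μ - ν) := by
      have : ν - μ = -(μ - ν) := by abel
      rw [this]
      have hneg : (-(μ - ν) : SignedMeasure X) = (-1 : ℝ) • (μ - ν) := by
        exact (neg_one_smul ℝ _).symm
      rw [hneg, Bf_smul_left, Bf_smul_right]; ring
    rw [hswap] at h
    linarith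

end Form
end Stmt10Aux

open Filter in
/-- A sequence `μ_n` in `M₁(X)` is maximal (`I(μ_n) → M(X)`) if and only if it is
Cauchy in the seminorm of `E(X)` (given by `(μ|ν) = (M(X)+1)μ(X)ν(X) - I(μ,ν)`) and
`(μ_n | ν) → 0` for every mass-zero signed measure `ν`. -/
theorem stmt10 {X : Type*} [MetricSpace X] [CompactSpace X] [MeasurableSpace X] [BorelSpace X]
    (hq : ∀ ν : SignedMeasure X, ν Set.univ = (0 : ℝ) → en (fun x y => dist x y) ν ν ≤ 0)
    (m : ℝ) (hm : IsLUB (MSet X) m)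
    (μ : ℕ → SignedMeasure X) (hμ : ∀ n, (μ n) Set.univ = (1 : ℝ)) :
    Filter.Tendsto (fun n => en (fun x y => dist x y) (μ n) (μ n)) Filter.atTop (nhds m) ↔
      ((∀ ε > (0 : ℝ), ∃ N : ℕ, ∀ p ≥ N, ∀ q ≥ N,
          Real.sqrt ((m + 1) * ((μ p - μ q) Set.univ) ^ 2 -
            en (fun x y => dist x y) (μ p - μ q) (μ p - μ q)) < ε) ∧
        ∀ ν : SignedMeasure X, ν Set.univ = (0 : ℝ) →
          Filter.Tendsto
            (fun n => (m + 1) * ((μ n) Set.univ) * (ν Set.univ) -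
              en (fun x y => dist x y) (μ n) ν)
            Filter.atTop (nhds 0)) := by
  classical
  have hub : ∀ r ∈ MSet X, r ≤ m := hm.1
  set d : X → X → ℝ := fun x y => dist x y with hd
  set B : SignedMeasure X → SignedMeasure X → ℝ := Stmt10Aux.Bf m with hB
  have hBdef : ∀ ρ σ : SignedMeasure X,
      B ρ σ = (m + 1) * (ρ Set.univ) * (σ Set.univ) - en d ρ σ := fun ρ σ => rfl
  have hIle : ∀ n, en d (μ n) (μ n) ≤ m := fun n => hub _ ⟨μ n, hμ n, rfl⟩
  have hBdiag : ∀ n, B (μ n) (μ n) = m + 1 - en d (μ n) (μ n) := by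
    intro n; rw [hBdef, hμ n]; ring
  have hexpr : ∀ p q, (m + 1) * ((μ p - μ q) Set.univ) ^ 2 -
      en d (μ p - μ q) (μ p - μ q) = B (μ p - μ q) (μ p - μ q) := by
    intro p q; rw [hBdef]; ring
  have hmassd : ∀ p q, (μ p - μ q) Set.univ = 0 := by
    intro p q; rw [VectorMeasure.sub_apply, hμ, hμ]; ring
  -- expansion of en on combinations
  have hen_exp : ∀ (ρ σ : SignedMeasure X) (t : ℝ),
      en d (ρ + t • σ) (ρ + t • σ) =
        en d ρ ρ + 2 * t * en d ρ σ + t ^ 2 * en d σ σ := by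
    intro ρ σ t
    rw [Stmt10Aux.en_add_left, Stmt10Aux.en_add_right, Stmt10Aux.en_add_right,
      Stmt10Aux.en_smul_left, Stmt10Aux.en_smul_right, Stmt10Aux.en_smul_left,
      Stmt10Aux.en_smul_right, Stmt10Aux.en_symm σ ρ]
    ring
  constructor
  · -- forward
    intro h
    constructor
    · intro ε hε
      obtain ⟨N, hN⟩ := (Metric.tendsto_atTop.mp h) (ε ^ 2 / 4) (by positivity)
      refine ⟨N, fun p hp q hq' => ?_⟩
      have hp' := hN p hp
      have hq'' := hN q hq'
      rw [Real.dist_eq] at hp' hq''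
      have hIp : m - en d (μ p) (μ p) < ε ^ 2 / 4 := by
        have := abs_lt.mp hp'; linarith
      have hIq : m - en d (μ q) (μ q) < ε ^ 2 / 4 := by
        have := abs_lt.mp hq''; linarith
      -- the half-sum measure
      have hσmass : (((2:ℝ)⁻¹) • (μ p + μ q)) Set.univ = 1 := by
        rw [VectorMeasure.smul_apply, VectorMeasure.add_apply, hμ, hμ]
        norm_num
      have hσle : en d ((2:ℝ)⁻¹ • (μ p + μ q)) ((2:ℝ)⁻¹ • (μ p + μ q)) ≤ m :=
        hub _ ⟨_, hσmass, rfl⟩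
      rw [Stmt10Aux.en_smul_left, Stmt10Aux.en_smul_right] at hσle
      have hsum : en d (μ p + μ q) (μ p + μ q) =
          en d (μ p) (μ p) + 2 * en d (μ p) (μ q) + en d (μ q) (μ q) := by
        rw [Stmt10Aux.en_add_left, Stmt10Aux.en_add_right, Stmt10Aux.en_add_right,
          Stmt10Aux.en_symm (μ q) (μ p)]
        ring
      have hdiff : en d (μ p - μ q) (μ p - μ q) =
          en d (μ p) (μ p) - 2 * en d (μ p) (μ q) + en d (μ q) (μ q) := by
        rw [Stmt10Aux.en_sub_left, Stmt10Aux.en_sub_right, Stmt10Aux.en_sub_right,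
          Stmt10Aux.en_symm (μ q) (μ p)]
        ring
      have hBle : (m + 1) * ((μ p - μ q) Set.univ) ^ 2 -
          en d (μ p - μ q) (μ p - μ q) < ε ^ 2 := by
        rw [hmassd p q, hdiff]
        nlinarith [hσle, hsum]
      exact (Real.sqrt_lt' hε).mpr hBle
    · intro ν hν
      rw [Metric.tendsto_atTop]
      intro ε hε
      have hC : 0 ≤ -en d ν ν := by have := hq ν hν; (try simp only [← hd] at this); linarith
      set C := -en d ν ν with hCdef
      set t := ε / (C + 1) with ht
      have htpos : 0 < t := by positivity
      have hte : t * (C + 1) = ε := by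
        rw [ht]; field_simp
      obtain ⟨N, hN⟩ := (Metric.tendsto_atTop.mp h) (t * ε) (by positivity)
      refine ⟨N, fun n hn => ?_⟩
      have hen : m - en d (μ n) (μ n) < t * ε := by
        have := abs_lt.mp ((Real.dist_eq _ _) ▸ hN n hn); linarith
      -- two perturbed measures
      have hmp : ((μ n) + t • ν) Set.univ = 1 := by
        rw [VectorMeasure.add_apply, VectorMeasure.smul_apply, hμ, hν]
        simp
      have hmm : ((μ n) + (-t) • ν) Set.univ = 1 := by
        rw [VectorMeasure.add_apply, VectorMeasure.smul_apply, hμ, hν]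
        simp
      have hplus := hub _ ⟨_, hmp, rfl⟩
      have hminus := hub _ ⟨_, hmm, rfl⟩
      rw [hen_exp] at hplus hminus
      rw [Real.dist_eq, hμ n, hν]
      have hgoal : |-(en d (μ n) ν)| < ε := by
        rw [abs_lt]
        constructor
        · nlinarith [hminus, hen, htpos, hC, hte]
        · nlinarith [hplus, hen, htpos, hC, hte]
      calc |(m + 1) * 1 * 0 - en d (μ n) ν - 0| = |-(en d (μ n) ν)| := by ring_nf
        _ < ε := hgoal
  · -- backward
    rintro ⟨ha, hb⟩
    set b : ℕ → ℝ := fun n => Real.sqrt (B (μ n) (μ n)) with hbdef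
    have hBnn : ∀ ρ : SignedMeasure X, 0 ≤ B ρ ρ := Stmt10Aux.Bf_nonneg m hq hub
    have hB1 : ∀ n, 1 ≤ B (μ n) (μ n) := by
      intro n; rw [hBdiag n]; linarith [hIle n]
    have hb1 : ∀ n, 1 ≤ b n := by
      intro n
      rw [hbdef]
      calc (1:ℝ) = Real.sqrt 1 := by simp
        _ ≤ Real.sqrt (B (μ n) (μ n)) := Real.sqrt_le_sqrt (hB1 n)
    have hbb : ∀ n, b n * b n = B (μ n) (μ n) := fun n =>
      Real.mul_self_sqrt (hBnn (μ n))
    have hcauchy : CauchySeq b := by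
      rw [Metric.cauchySeq_iff]
      intro ε hε
      obtain ⟨N, hN⟩ := ha ε hε
      refine ⟨N, fun p hp q hq' => ?_⟩
      have h1 := hN p hp q hq'
      rw [hexpr] at h1
      have h2 := Stmt10Aux.nrm_rev m hq hub (μ p) (μ q)
      rw [Real.dist_eq]
      calc |b p - b q| ≤ Real.sqrt (B (μ p - μ q) (μ p - μ q)) := h2
        _ < ε := h1
    obtain ⟨L, hL⟩ := cauchySeq_tendsto_of_complete hcauchy
    have hL1 : 1 ≤ L := ge_of_tendsto hL (Eventually.of_forall hb1)
    have hLpos : 0 < L := by linarith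
    -- main bound: L * L ≤ 1
    have hLle : L * L ≤ 1 := by
      apply le_of_forall_pos_le_add
      intro ε hε
      -- get a near-maximal measure σ
      obtain ⟨r, hrM, hr⟩ : ∃ r ∈ MSet X, m - ε < r := by
        by_contra hcon
        push_neg at hcon
        have : m ≤ m - ε := hm.2 fun x hx => (hcon x hx)
        linarith
      obtain ⟨σ, hσ1, hσ2⟩ := hrM
      have hBσ : B σ σ < 1 + ε := by
        rw [hBdef, hσ1, hσ2]
        ring_nf
        nlinarith [hr]
      -- B (μ n) (μ n - σ) → 0
      have hstep : Tendsto (fun n => B (μ n) (μ n - σ)) atTop (nhds 0) := by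
        rw [Metric.tendsto_atTop]
        intro δ hδ
        obtain ⟨K₁, hK₁⟩ := Metric.tendsto_atTop.mp hL 1 one_pos
        have hbnd : ∀ n ≥ K₁, b n ≤ L + 1 := by
          intro n hn
          have := abs_lt.mp ((Real.dist_eq _ _) ▸ hK₁ n hn)
          linarith
        have hL1pos : (0:ℝ) < L + 1 := by linarith
        obtain ⟨K₂, hK₂⟩ := ha (δ / (2 * (L + 1))) (by positivity)
        set k := max K₁ K₂ with hk
        have hmk : (μ k - σ) Set.univ = 0 := by
          rw [VectorMeasure.sub_apply, hμ, hσ1]; ring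
        obtain ⟨K₃, hK₃⟩ := Metric.tendsto_atTop.mp (hb (μ k - σ) hmk) (δ / 2) (by positivity)
        refine ⟨max k K₃, fun n hn => ?_⟩
        have hnk : n ≥ k := le_trans (le_max_left _ _) hn
        have hnK₃ : n ≥ K₃ := le_trans (le_max_right _ _) hn
        have hnK₁ : n ≥ K₁ := le_trans (le_max_left _ _) hnk
        have hnK₂ : n ≥ K₂ := le_trans (le_max_right _ _) hnk
        have hkK₂ : k ≥ K₂ := le_max_right _ _
        have hdec : B (μ n) (μ n - σ) = B (μ n) (μ n - μ k) + B (μ n) (μ k - σ) := by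
          have : μ n - σ = (μ n - μ k) + (μ k - σ) := by abel
          rw [this]; exact Stmt10Aux.Bf_add_right m _ _ _
        -- term 1
        have hs1 := hK₂ n hnK₂ k hkK₂
        rw [hexpr] at hs1
        have ht1 : |B (μ n) (μ n - μ k)| < δ / 2 := by
          have hcs := Stmt10Aux.Bf_abs_le m hq hub (μ n) (μ n - μ k)
          have hsq : Real.sqrt (B (μ n) (μ n)) = b n := rfl
          have hbn : b n ≤ L + 1 := hbnd n hnK₁
          have hbnn' : 0 ≤ b n := le_trans zero_le_one (hb1 n)
          have hs0 : 0 ≤ Real.sqrt (B (μ n - μ k) (μ n - μ k)) := Real.sqrt_nonneg _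
          calc |B (μ n) (μ n - μ k)|
              ≤ b n * Real.sqrt (B (μ n - μ k) (μ n - μ k)) := by rw [← hsq]; exact hcs
            _ ≤ (L + 1) * Real.sqrt (B (μ n - μ k) (μ n - μ k)) :=
                mul_le_mul_of_nonneg_right hbn hs0
            _ < (L + 1) * (δ / (2 * (L + 1))) := by
                exact mul_lt_mul_of_pos_left hs1 hL1pos
            _ = δ / 2 := by field_simp
        -- term 2
        have ht2 : |B (μ n) (μ k - σ)| < δ / 2 := by
          have := hK₃ n hnK₃
          rw [Real.dist_eq, sub_zero] at this
          exact this
        rw [Real.dist_eq, sub_zero, hdec]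
        calc |B (μ n) (μ n - μ k) + B (μ n) (μ k - σ)|
            ≤ |B (μ n) (μ n - μ k)| + |B (μ n) (μ k - σ)| := abs_add_le _ _
          _ < δ / 2 + δ / 2 := add_lt_add ht1 ht2
          _ = δ := by ring
      -- B (μ n) σ → L * L
      have hstep2 : Tendsto (fun n => B (μ n) σ) atTop (nhds (L * L)) := by
        have hrw : ∀ n, B (μ n) σ = b n * b n - B (μ n) (μ n - σ) := by
          intro n
          have hsr := Stmt10Aux.Bf_sub_right m (μ n) σ (μ n)
          rw [hbb n]
          have hsr' : B (μ n) (μ n - σ) = B (μ n) (μ n) - B (μ n) σ := hsr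
          linarith
        have h1 : Tendsto (fun n => b n * b n - B (μ n) (μ n - σ)) atTop
            (nhds (L * L - 0)) := (hL.mul hL).sub hstep
        rw [sub_zero] at h1
        exact h1.congr fun n => (hrw n).symm
      -- limit inequality
      have hub2 : Tendsto (fun n => b n * Real.sqrt (B σ σ)) atTop
          (nhds (L * Real.sqrt (B σ σ))) := hL.mul_const _
      have hle : L * L ≤ L * Real.sqrt (B σ σ) := by
        refine le_of_tendsto_of_tendsto' hstep2 hub2 fun n => ?_
        calc B (μ n) σ ≤ |B (μ n) σ| := le_abs_self _
          _ ≤ Real.sqrt (B (μ n) (μ n)) * Real.sqrt (B σ σ) :=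
              Stmt10Aux.Bf_abs_le m hq hub (μ n) σ
          _ = b n * Real.sqrt (B σ σ) := rfl
      have hsσ : Real.sqrt (B σ σ) * Real.sqrt (B σ σ) = B σ σ :=
        Real.mul_self_sqrt (hBnn σ)
      nlinarith [hle, hsσ, hBσ, Real.sqrt_nonneg (B σ σ), hLpos, hL1]
    have hLeq : L = 1 := by nlinarith [hL1, hLle]
    -- conclude
    have hfin : Tendsto (fun n => (m + 1) - b n * b n) atTop (nhds ((m + 1) - L * L)) :=
      tendsto_const_nhds.sub (hL.mul hL)
    have : Tendsto (fun n => en d (μ n) (μ n)) atTop (nhds ((m + 1) - L * L)) := by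
      refine hfin.congr fun n => ?_
      rw [hbb n, hBdiag n]
      ring
    rw [hLeq] at this
    simpa using this
end
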